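/- arXiv:2407.13540 — 3 statements merged into one kernel-verified Lean document; each statement's English description precedes it below -/
import Mathlib

section
/- Let (π, H_π) be a projective discrete series representation of a unimodular amenable second countable group G with formal degree d_π, and let g ∈ D_π. If Λ ⊆ G is such that {π(λ)g}_{λ∈Λ} is a Riesz sequence in H_π, then the upper Beurling density satisfies D^+(Λ) := lim_n sup_{x∈G} #(Λ ∩ xK_n)/μ(K_n) ≤ d_π, for any strong Følner exhaustion sequence (K_n). -/
open MeasureTheory Pointwise Filter

lemma coeff_norm_shift {G H : Type*} [Group G] [NormedAddCommGroup H] [InnerProductSpace ℂ H]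
    (π : G → H →L[ℂ] H) (hπnorm : ∀ (x : G) (f : H), ‖π x f‖ = ‖f‖)
    (hπproj : ∀ x y : G, ∃ c : ℂ, ‖c‖ = 1 ∧ (π x).comp (π y) = c • π (x * y))
    (a b : G) (f h : H) :
    ‖(inner ℂ (π a f) (π b h) : ℂ)‖ = ‖(inner ℂ f (π (a⁻¹ * b) h) : ℂ)‖ := by
  have hinj : ∀ x : G, Function.Injective (π x) := by
    intro x u v huv
    have h1 := hπnorm x (u - v)
    rw [map_sub, huv, sub_self, norm_zero] at h1
    exact sub_eq_zero.mp (norm_eq_zero.mp h1.symm)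
  obtain ⟨c₀, hc₀, h₀⟩ := hπproj 1 1
  rw [one_mul] at h₀
  have hπ1 : ∀ v : H, π 1 v = c₀ • v := by
    intro v
    apply hinj 1
    have := congrArg (fun T : H →L[ℂ] H => T v) h₀
    simpa [_root_.map_smul] using this
  obtain ⟨c₁, hc₁, h₁⟩ := hπproj a⁻¹ a
  obtain ⟨c₂, hc₂, h₂⟩ := hπproj a⁻¹ b
  rw [inv_mul_cancel] at h₁
  set L : H →ₗᵢ[ℂ] H := ⟨(π a⁻¹ : H →L[ℂ] H).toLinearMap, hπnorm a⁻¹⟩ with hL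
  have key : (inner ℂ (π a f) (π b h) : ℂ)
      = inner ℂ (π a⁻¹ (π a f)) (π a⁻¹ (π b h)) := (L.inner_map_map _ _).symm
  have e1 : π a⁻¹ (π a f) = c₁ • (c₀ • f) := by
    have := congrArg (fun T : H →L[ℂ] H => T f) h₁
    simp only [ContinuousLinearMap.comp_apply, ContinuousLinearMap.smul_apply] at this
    rw [this, hπ1]
  have e2 : π a⁻¹ (π b h) = c₂ • π (a⁻¹ * b) h := by
    have := congrArg (fun T : H →L[ℂ] H => T h) h₂
    simpa using this
  rw [key, e1, e2, inner_smul_left, inner_smul_left, inner_smul_right]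
  simp [norm_mul, hc₀, hc₁, hc₂]

set_option maxHeartbeats 1000000 in
/-- the upper Beurling density of the index set of a coherent Riesz
sequence is at most the formal degree: `D⁺(Λ) ≤ d_π`, phrased as: for every `ε > 0`,
eventually `#(Λ ∩ xKₙ) ≤ (d_π + ε) μ(Kₙ)` uniformly in `x`. -/
theorem coherent_riesz_upper_density {G H : Type*} [Group G] [TopologicalSpace G]
    [IsTopologicalGroup G] [LocallyCompactSpace G] [SecondCountableTopology G]
    [MeasurableSpace G] [BorelSpace G]
    [NormedAddCommGroup H] [InnerProductSpace ℂ H] [CompleteSpace H]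
    (μ : Measure G) [μ.IsHaarMeasure] [μ.IsMulRightInvariant]
    (π : G → H →L[ℂ] H)
    (hπnorm : ∀ (x : G) (f : H), ‖π x f‖ = ‖f‖)
    (hπproj : ∀ x y : G, ∃ c : ℂ, ‖c‖ = 1 ∧ (π x).comp (π y) = c • π (x * y))
    (hπmeas : ∀ f h : H, Measurable fun x => (inner ℂ f (π x h) : ℂ))
    (hπirr : ∀ V : Submodule ℂ H, (∀ x : G, ∀ v ∈ V, π x v ∈ V) → V ≠ ⊥ → V = ⊤)
    (dπ : ℝ) (hdπ : 0 < dπ)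
    (hortho : ∀ f h : H, ∫ x, ‖(inner ℂ f (π x h) : ℂ)‖ ^ 2 ∂μ = dπ⁻¹ * ‖f‖ ^ 2 * ‖h‖ ^ 2)
    (K : ℕ → Set G)
    (hKcpt : ∀ n, IsCompact (K n)) (hKpos : ∀ n, 0 < μ (K n))
    (hK1 : ∀ n, (1 : G) ∈ K n) (hKmono : ∀ n, K n ⊆ interior (K (n + 1)))
    (hKexh : (⋃ n, K n) = Set.univ)
    (hKfolner : ∀ C : Set G, IsCompact C →
      Tendsto (fun n => μ (K n * C ∩ (K n)ᶜ * C) / μ (K n)) atTop (nhds 0))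
    (Q : Set G) (hQcpt : IsCompact (closure Q)) (hQsym : Q⁻¹ = Q) (hQ1 : Q ∈ nhds 1)
    (g : H)
    (hgD : Integrable (fun x => (⨆ q : Q, ‖(inner ℂ g (π (x * (q : G)) g) : ℂ)‖) ^ 2) μ)
    (Λ : Set G) (A B : ℝ) (hA : 0 < A) (hAB : A ≤ B)
    (hriesz : ∀ c : ↥Λ →₀ ℂ,
      A * ∑ l ∈ c.support, ‖c l‖ ^ 2
          ≤ ‖∑ l ∈ c.support, c l • π (l : G) g‖ ^ 2 ∧
        ‖∑ l ∈ c.support, c l • π (l : G) g‖ ^ 2 ≤ B * ∑ l ∈ c.support, ‖c l‖ ^ 2) :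
    ∃ C > 0,
    ∀ ε > 0, ∃ N : ℕ, ∀ n ≥ N, ∀ x : G, (Λ ∩ x • K n).Finite ∧
      ((Λ ∩ x • K n).ncard : ℝ) ≤ (dπ + ε) * (μ (K n)).toReal := by
  classical
  refine ⟨1, one_pos, ?_⟩
  by_cases hΛe : Λ = ∅
  · intro ε hε
    refine ⟨0, fun n _ x => ?_⟩
    have hempty : (Λ ∩ x • K n) = ∅ := by simp [hΛe]
    rw [hempty]
    refine ⟨Set.finite_empty, ?_⟩
    have : (0:ℝ) ≤ (dπ + ε) * (μ (K n)).toReal := by positivity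
    simpa using this
  obtain ⟨l0, hl0⟩ := Set.nonempty_iff_ne_empty.mpr hΛe
  set gsq := ‖g‖ ^ 2 with hgsq
  -- `A ≤ ‖g‖²`, hence `g ≠ 0`
  have hgA : A ≤ gsq := by
    have h1 := (hriesz (Finsupp.single ⟨l0, hl0⟩ 1)).1
    rw [Finsupp.support_single_ne_zero _ one_ne_zero] at h1
    simpa [hπnorm] using h1
  have hgpos : 0 < gsq := lt_of_lt_of_le hA hgA
  have hg0 : g ≠ 0 := by
    intro h
    rw [h] at hgsq
    simp [hgsq] at hgpos
  -- integrability of matrix coefficients against `g`, from the orthogonality relations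
  have hIntOf : ∀ f : H, f ≠ 0 → Integrable (fun y => ‖(inner ℂ f (π y g) : ℂ)‖ ^ 2) μ := by
    intro f hf
    by_contra hni
    have h0 := hortho f g
    rw [integral_undef hni] at h0
    have h1 : (0:ℝ) < dπ⁻¹ * ‖f‖ ^ 2 * ‖g‖ ^ 2 := by
      have hf' : ‖f‖ ≠ 0 := norm_ne_zero_iff.mpr hf
      have hg' : ‖g‖ ≠ 0 := norm_ne_zero_iff.mpr hg0
      positivity
    rw [← h0] at h1
    exact lt_irrefl _ h1
  set φ : G → ℝ := fun y => ‖(inner ℂ g (π y g) : ℂ)‖ ^ 2 with hφdef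
  have hφint : Integrable φ μ := hIntOf g hg0
  have hφnn : ∀ y, 0 ≤ φ y := fun y => by positivity
  -- tail integrals over complements of the interiors of the `K m`
  set O : ℕ → Set G := fun m => interior (K m) with hOdef
  have hOmeas : ∀ m, MeasurableSet (O m) := fun m => isOpen_interior.measurableSet
  have hOsub : ∀ m, O m ⊆ K m := fun m => interior_subset
  have hOmono : Monotone O := by
    apply monotone_nat_of_le_succ
    intro m
    exact (hOsub m).trans (hKmono m)
  have hOunion : (⋃ m, O m) = Set.univ := by
    apply Set.eq_univ_of_forall
    intro y
    have : y ∈ ⋃ n, K n := by rw [hKexh]; trivial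
    obtain ⟨m, hm⟩ := Set.mem_iUnion.mp this
    exact Set.mem_iUnion.mpr ⟨m + 1, hKmono m hm⟩
  set τ : ℕ → ℝ := fun m => ∫ y in (O m)ᶜ, φ y ∂μ with hτdef
  have hτeq : ∀ m, τ m = (∫ y, φ y ∂μ) - ∫ y in O m, φ y ∂μ := by
    intro m
    have := integral_add_compl (hOmeas m) hφint
    simp only [hτdef]
    linarith
  have hτ0 : Tendsto τ atTop (nhds 0) := by
    have h1 := tendsto_setIntegral_of_monotone hOmeas hOmono
      (by rw [hOunion]; exact hφint.integrableOn)
    rw [hOunion, Measure.restrict_univ] at h1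
    have h2 : Tendsto (fun m => (∫ y, φ y ∂μ) - ∫ y in O m, φ y ∂μ) atTop
        (nhds ((∫ y, φ y ∂μ) - ∫ y, φ y ∂μ)) := tendsto_const_nhds.sub h1
    rw [sub_self] at h2
    exact h2.congr fun m => (hτeq m).symm
  -- lower Riesz bound for families indexed by finite subsets of `Λ`
  have rlow : ∀ (F : Finset ↥Λ) (c : ↥F → ℂ),
      A * ∑ i, ‖c i‖ ^ 2 ≤ ‖∑ i, c i • π ((i : ↥Λ) : G) g‖ ^ 2 := by
    intro F c
    set cf : ↥Λ → ℂ := fun l => if h : l ∈ F then c ⟨l, h⟩ else 0 with hcf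
    have hsupp : ∀ l, cf l ≠ 0 → l ∈ F := by
      intro l hl
      by_contra hc
      simp [hcf, hc] at hl
    set c' : ↥Λ →₀ ℂ := Finsupp.onFinset F cf hsupp with hc'
    have happ : ∀ l, c' l = cf l := fun l => rfl
    have hss : c'.support ⊆ F := Finsupp.support_onFinset_subset
    have h1 : ∑ l ∈ c'.support, ‖c' l‖ ^ 2 = ∑ i, ‖c i‖ ^ 2 := by
      calc ∑ l ∈ c'.support, ‖c' l‖ ^ 2
          = ∑ l ∈ F, ‖c' l‖ ^ 2 := by
            apply Finset.sum_subset hss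
            intro l _ hl
            rw [Finsupp.notMem_support_iff.mp hl]
            simp
        _ = ∑ i : ↥F, ‖c' (i : ↥Λ)‖ ^ 2 := (Finset.sum_coe_sort F (fun l => ‖c' l‖ ^ 2)).symm
        _ = ∑ i, ‖c i‖ ^ 2 := by
            apply Finset.sum_congr rfl
            intro i _
            rw [happ]
            simp [hcf, dif_pos i.2]
    have h2 : ∑ l ∈ c'.support, c' l • π (l : G) g = ∑ i, c i • π ((i : ↥Λ) : G) g := by
      calc ∑ l ∈ c'.support, c' l • π (l : G) g
          = ∑ l ∈ F, c' l • π (l : G) g := by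
            apply Finset.sum_subset hss
            intro l _ hl
            rw [Finsupp.notMem_support_iff.mp hl]
            simp
        _ = ∑ i : ↥F, c' (i : ↥Λ) • π ((i : ↥Λ) : G) g :=
            (Finset.sum_coe_sort F (fun l => c' l • π (l : G) g)).symm
        _ = ∑ i, c i • π ((i : ↥Λ) : G) g := by
            apply Finset.sum_congr rfl
            intro i _
            rw [happ]
            simp [hcf, dif_pos i.2]
    have := (hriesz c').1
    rw [h1, h2] at this
    exact this
  -- the key counting estimate
  have key : ∀ (n m : ℕ) (x : G) (F : Finset ↥Λ), (∀ l ∈ F, (l : G) ∈ x • K n) →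
      (F.card : ℝ) * (dπ⁻¹ * gsq - A⁻¹ * τ m) ≤ gsq * (μ (K n * K m)).toReal := by
    intro n m x F hF
    set v : ↥F → H := fun i => π ((i : ↥Λ) : G) g with hv
    have hli : LinearIndependent ℂ v := by
      rw [Fintype.linearIndependent_iff]
      intro c hc i
      have h1 : A * ∑ j, ‖c j‖ ^ 2 ≤ ‖∑ j, c j • v j‖ ^ 2 := rlow F c
      rw [hc] at h1
      simp only [norm_zero] at h1
      have h2 : ∑ j, ‖c j‖ ^ 2 ≤ 0 := by nlinarith
      have h3 : ∀ j : ↥F, ‖c j‖ ^ 2 = 0 := by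
        intro j
        have hnn : ∀ j : ↥F, (0:ℝ) ≤ ‖c j‖ ^ 2 := fun j => by positivity
        have := Finset.sum_nonneg (fun j (_ : j ∈ Finset.univ) => hnn j)
        have h4 : ∑ j, ‖c j‖ ^ 2 = 0 := le_antisymm h2 this
        exact (Finset.sum_eq_zero_iff_of_nonneg (fun j _ => hnn j)).mp h4 j (Finset.mem_univ j)
      have := h3 i
      simpa using this
    set V := Submodule.span ℂ (Set.range v) with hV
    haveI : FiniteDimensional ℂ V := FiniteDimensional.span_of_finite ℂ (Set.finite_range v)
    have hdcard : Module.finrank ℂ V = F.card := by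
      rw [hV, finrank_span_eq_card hli, Fintype.card_coe]
    set e : Fin (Module.finrank ℂ V) → H := fun i => ((stdOrthonormalBasis ℂ V) i : H) with he
    have heo : Orthonormal ℂ e :=
      (stdOrthonormalBasis ℂ V).orthonormal.comp_linearIsometry V.subtypeₗᵢ
    have heV : ∀ i, e i ∈ V := fun i => ((stdOrthonormalBasis ℂ V) i).2
    set Sv : G → ℝ := fun y => ∑ i, ‖(inner ℂ (e i) (π y g) : ℂ)‖ ^ 2 with hSv
    have hSi_int : ∀ i, Integrable (fun y => ‖(inner ℂ (e i) (π y g) : ℂ)‖ ^ 2) μ :=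
      fun i => hIntOf (e i) (heo.ne_zero i)
    have hSint : Integrable Sv μ := integrable_finset_sum _ fun i _ => hSi_int i
    have hSnn : ∀ y, 0 ≤ Sv y := fun y => Finset.sum_nonneg fun i _ => by positivity
    have hSval : ∫ y, Sv y ∂μ = (F.card : ℝ) * (dπ⁻¹ * gsq) := by
      rw [hSv, integral_finset_sum _ fun i _ => hSi_int i]
      have hone : ∀ i, ∫ y, ‖(inner ℂ (e i) (π y g) : ℂ)‖ ^ 2 ∂μ = dπ⁻¹ * gsq := by
        intro i
        rw [hortho (e i) g, heo.1 i]
        simp [hgsq]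
      rw [Finset.sum_congr rfl fun i _ => hone i, Finset.sum_const, Finset.card_univ,
        Fintype.card_fin, hdcard, nsmul_eq_mul]
    set T := toMeasurable μ (x • (K n * K m)) with hT
    have hTm : MeasurableSet T := measurableSet_toMeasurable μ _
    have hTsub : x • (K n * K m) ⊆ T := subset_toMeasurable μ _
    have hμT : μ T = μ (K n * K m) := by rw [hT, measure_toMeasurable, measure_smul]
    have hμTfin : μ T ≠ ⊤ := by
      rw [hμT]; exact (((hKcpt n).mul (hKcpt m)).measure_lt_top).ne
    have hnear : ∫ y in T, Sv y ∂μ ≤ gsq * (μ (K n * K m)).toReal := by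
      have h1 : ∫ y in T, Sv y ∂μ ≤ ∫ _y in T, gsq ∂μ := by
        apply setIntegral_mono_on hSint.integrableOn
          (integrableOn_const hμTfin) hTm
        intro y _
        calc Sv y ≤ ‖π y g‖ ^ 2 := heo.sum_inner_products_le (π y g)
          _ = gsq := by rw [hπnorm, hgsq]
      rw [setIntegral_const, smul_eq_mul, measureReal_def, hμT, mul_comm] at h1
      exact h1
    set Φ : G → ℝ := fun y => ∑ i : ↥F, ‖(inner ℂ (v i) (π y g) : ℂ)‖ ^ 2 with hΦ
    have hΦnn : ∀ y, 0 ≤ Φ y := fun y => Finset.sum_nonneg fun i _ => by positivity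
    have hptS : ∀ y, Sv y ≤ A⁻¹ * Φ y := by
      intro y
      set a : Fin (Module.finrank ℂ V) → ℂ := fun i => (inner ℂ (e i) (π y g) : ℂ) with ha
      set w : H := ∑ i, a i • e i with hw
      have hwV : w ∈ V := Submodule.sum_mem _ fun i _ => Submodule.smul_mem _ _ (heV i)
      have hwV' : w ∈ Submodule.span ℂ (Set.range v) := by rw [← hV]; exact hwV
      obtain ⟨c, hc⟩ := (Submodule.mem_span_range_iff_exists_fun ℂ).mp hwV'
      have hSynn : 0 ≤ Sv y := hSnn y
      have hwn : ‖w‖ ^ 2 = Sv y := by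
        have h1 : (inner ℂ w w : ℂ) = ∑ i, (starRingEnd ℂ) (a i) * a i :=
          heo.inner_sum a a Finset.univ
        have h2 : (inner ℂ w w : ℂ) = ((Sv y : ℝ) : ℂ) := by
          rw [h1, hSv]
          push_cast
          exact Finset.sum_congr rfl fun i _ => by
            rw [RCLike.conj_mul]; norm_cast
        have h3 : (inner ℂ w w : ℂ) = ((‖w‖ : ℂ)) ^ 2 := inner_self_eq_norm_sq_to_K w
        have h4 : ((‖w‖ ^ 2 : ℝ) : ℂ) = ((Sv y : ℝ) : ℂ) := by
          rw [← h2, h3]; push_cast; ring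
        exact_mod_cast h4
      have hwv : (inner ℂ w (π y g) : ℂ) = ((Sv y : ℝ) : ℂ) := by
        rw [hw, sum_inner]
        simp only [inner_smul_left]
        rw [hSv]
        push_cast
        exact Finset.sum_congr rfl fun i _ => by
          rw [ha, RCLike.conj_mul]; norm_cast
      have hcs : Sv y ≤ ∑ i, ‖c i‖ * ‖(inner ℂ (v i) (π y g) : ℂ)‖ := by
        have h4 : (inner ℂ w (π y g) : ℂ)
            = ∑ i, (starRingEnd ℂ) (c i) * (inner ℂ (v i) (π y g) : ℂ) := by
          rw [← hc, sum_inner]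
          simp only [inner_smul_left]
        have h5 : Sv y = ‖(inner ℂ w (π y g) : ℂ)‖ := by
          rw [hwv]
          simp [abs_of_nonneg hSynn]
        rw [h5, h4]
        calc ‖∑ i, (starRingEnd ℂ) (c i) * (inner ℂ (v i) (π y g) : ℂ)‖
            ≤ ∑ i, ‖(starRingEnd ℂ) (c i) * (inner ℂ (v i) (π y g) : ℂ)‖ := norm_sum_le _ _
          _ = ∑ i, ‖c i‖ * ‖(inner ℂ (v i) (π y g) : ℂ)‖ := by
              apply Finset.sum_congr rfl
              intro i _
              rw [norm_mul, RCLike.norm_conj]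
      have hcs2 : (∑ i, ‖c i‖ * ‖(inner ℂ (v i) (π y g) : ℂ)‖) ^ 2
          ≤ (∑ i, ‖c i‖ ^ 2) * Φ y := by
        have h6 := Finset.sum_mul_sq_le_sq_mul_sq Finset.univ (fun i => ‖c i‖)
          (fun i => ‖(inner ℂ (v i) (π y g) : ℂ)‖)
        rw [hΦ]
        exact h6
      have hrl : A * ∑ i, ‖c i‖ ^ 2 ≤ Sv y := by
        calc A * ∑ i, ‖c i‖ ^ 2 ≤ ‖∑ i, c i • v i‖ ^ 2 := rlow F c
          _ = ‖w‖ ^ 2 := by rw [hc]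
          _ = Sv y := hwn
      have hscnn : (0:ℝ) ≤ ∑ i, ‖c i‖ ^ 2 := Finset.sum_nonneg fun i _ => by positivity
      rcases hSynn.eq_or_lt with hz | hz
      · rw [← hz]
        positivity
      · have e1 : A * (Sv y) ^ 2 ≤ A * (∑ i, ‖c i‖ * ‖(inner ℂ (v i) (π y g) : ℂ)‖) ^ 2 := by
          have : (Sv y) ^ 2 ≤ (∑ i, ‖c i‖ * ‖(inner ℂ (v i) (π y g) : ℂ)‖) ^ 2 := by
            apply sq_le_sq' (by nlinarith) hcs
          nlinarith [hA.le]
        have e2 : A * (∑ i, ‖c i‖ * ‖(inner ℂ (v i) (π y g) : ℂ)‖) ^ 2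
            ≤ A * ((∑ i, ‖c i‖ ^ 2) * Φ y) := by nlinarith [hA.le]
        have e3 : A * ((∑ i, ‖c i‖ ^ 2) * Φ y) ≤ Sv y * Φ y := by
          nlinarith [hΦnn y]
        have e4 : A * (Sv y) ^ 2 ≤ Sv y * Φ y := e1.trans (e2.trans e3)
        have e5 : A * Sv y ≤ Φ y := by nlinarith
        rw [inv_mul_eq_div, le_div_iff₀ hA]
        linarith
    have hΦi_eq : ∀ i : ↥F, (fun y => ‖(inner ℂ (v i) (π y g) : ℂ)‖ ^ 2)
        = fun y => φ ((((i : ↥Λ) : G))⁻¹ * y) := by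
      intro i
      funext y
      rw [hφdef, hv]
      simp only
      rw [coeff_norm_shift π hπnorm hπproj]
    have hΦi_int : ∀ i : ↥F, Integrable (fun y => ‖(inner ℂ (v i) (π y g) : ℂ)‖ ^ 2) μ := by
      intro i
      rw [hΦi_eq i]
      exact hφint.comp_mul_left _
    have hΦint : Integrable Φ μ := integrable_finset_sum _ fun i _ => hΦi_int i
    have htail : ∀ i : ↥F, ∫ y in Tᶜ, ‖(inner ℂ (v i) (π y g) : ℂ)‖ ^ 2 ∂μ ≤ τ m := by
      intro i
      set lam := ((i : ↥Λ) : G) with hlamdef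
      have hlam : lam ∈ x • K n := hF _ i.2
      obtain ⟨k, hk, hxk⟩ := hlam
      set ψ : G → ℝ := Set.indicator ((O m)ᶜ) φ with hψ
      have hψint : Integrable ψ μ := hφint.indicator (hOmeas m).compl
      have hψnn : ∀ z, 0 ≤ ψ z := fun z => Set.indicator_nonneg (fun z _ => hφnn z) z
      have hpt : ∀ y ∈ Tᶜ, φ (lam⁻¹ * y) ≤ ψ (lam⁻¹ * y) := by
        intro y hy
        have hnot : lam⁻¹ * y ∈ (O m)ᶜ := by
          intro hmem
          apply hy
          apply hTsub
          refine ⟨k * (lam⁻¹ * y), Set.mul_mem_mul hk (hOsub m hmem), ?_⟩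
          show x • (k * (lam⁻¹ * y)) = y
          have hxk' : x * k = lam := hxk
          rw [smul_eq_mul, ← mul_assoc, hxk', ← mul_assoc, mul_inv_cancel, one_mul]
        rw [hψ, Set.indicator_of_mem hnot]
      calc ∫ y in Tᶜ, ‖(inner ℂ (v i) (π y g) : ℂ)‖ ^ 2 ∂μ
          = ∫ y in Tᶜ, φ (lam⁻¹ * y) ∂μ := by rw [hΦi_eq i]
        _ ≤ ∫ y in Tᶜ, ψ (lam⁻¹ * y) ∂μ :=
            setIntegral_mono_on (hφint.comp_mul_left _).integrableOn
              (hψint.comp_mul_left _).integrableOn hTm.compl hpt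
        _ ≤ ∫ y, ψ (lam⁻¹ * y) ∂μ :=
            setIntegral_le_integral (hψint.comp_mul_left _)
              (Filter.Eventually.of_forall fun z => hψnn _)
        _ = ∫ z, ψ z ∂μ := integral_mul_left_eq_self ψ lam⁻¹
        _ = τ m := by rw [hψ, integral_indicator (hOmeas m).compl, hτdef]
    have hfar : ∫ y in Tᶜ, Sv y ∂μ ≤ A⁻¹ * ((F.card : ℝ) * τ m) := by
      calc ∫ y in Tᶜ, Sv y ∂μ ≤ ∫ y in Tᶜ, A⁻¹ * Φ y ∂μ :=
            setIntegral_mono_on hSint.integrableOn (hΦint.const_mul _).integrableOn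
              hTm.compl fun y _ => hptS y
        _ = A⁻¹ * ∫ y in Tᶜ, Φ y ∂μ := by
            rw [show (fun y => A⁻¹ * Φ y) = fun y => ((A⁻¹ : ℂ).re * Φ y) by norm_num]
            exact_mod_cast integral_const_mul (A⁻¹ : ℝ) Φ
        _ ≤ A⁻¹ * ((F.card : ℝ) * τ m) := by
            apply mul_le_mul_of_nonneg_left _ (by positivity)
            rw [hΦ]
            rw [integral_finset_sum _ fun i _ => (hΦi_int i).integrableOn]
            calc ∑ i : ↥F, ∫ y in Tᶜ, ‖(inner ℂ (v i) (π y g) : ℂ)‖ ^ 2 ∂μ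
                ≤ ∑ _i : ↥F, τ m := Finset.sum_le_sum fun i _ => htail i
              _ = (F.card : ℝ) * τ m := by
                  rw [Finset.sum_const, Finset.card_univ, Fintype.card_coe, nsmul_eq_mul]
    have hsplit : (∫ y in T, Sv y ∂μ) + ∫ y in Tᶜ, Sv y ∂μ = (F.card : ℝ) * (dπ⁻¹ * gsq) := by
      rw [integral_add_compl hTm hSint, hSval]
    nlinarith [hnear, hfar, hsplit]
  -- main argument
  intro ε hε
  set ε₁ := ε / (2 * (dπ + ε)) with hε₁
  have hε₁pos : 0 < ε₁ := by positivity
  have hε₁lt : ε₁ < 1 := by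
    rw [hε₁, div_lt_one (by positivity)]
    nlinarith
  -- choose a tail index m
  have hδpos : (0:ℝ) < A * (dπ⁻¹ * gsq) * ε₁ := by positivity
  obtain ⟨m, hm⟩ := (hτ0.eventually_lt_const hδpos).exists
  -- Følner for K m
  have hηpos : (0:ENNReal) < ENNReal.ofReal (ε / (2 * dπ)) := ENNReal.ofReal_pos.mpr (by positivity)
  obtain ⟨N, hN⟩ := eventually_atTop.mp
    (((hKfolner (K m) (hKcpt m)).eventually_lt_const hηpos))
  refine ⟨N, fun n hn x => ?_⟩
  have hμn_ne : μ (K n) ≠ 0 := (hKpos n).ne'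
  have hμn_top : μ (K n) ≠ ⊤ := ((hKcpt n).measure_lt_top).ne
  have hμKK : (μ (K n * K m)).toReal ≤ (1 + ε / (2 * dπ)) * (μ (K n)).toReal := by
    have hsub : K n * K m ⊆ K n ∪ (K n * K m ∩ (K n)ᶜ * K m) := by
      intro y hy
      by_cases h : y ∈ K n
      · exact Or.inl h
      · refine Or.inr ?_
        have : y * 1 ∈ (K n * K m ∩ (K n)ᶜ) * K m := Set.mul_mem_mul ⟨hy, h⟩ (hK1 m)
        simpa using this
    have h1 : μ (K n * K m) ≤ μ (K n) + μ (K n * K m ∩ (K n)ᶜ * K m) :=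
      (measure_mono hsub).trans (measure_union_le _ _)
    have h2 : μ (K n * K m ∩ (K n)ᶜ * K m) ≤ ENNReal.ofReal (ε / (2 * dπ)) * μ (K n) := by
      have h3 := (hN n hn).le
      rwa [ENNReal.div_le_iff hμn_ne hμn_top] at h3
    have h3 : μ (K n * K m) ≤ μ (K n) + ENNReal.ofReal (ε / (2 * dπ)) * μ (K n) :=
      h1.trans (add_le_add_right h2 _)
    have hfin : μ (K n) + ENNReal.ofReal (ε / (2 * dπ)) * μ (K n) ≠ ⊤ := by
      refine ENNReal.add_ne_top.mpr ⟨hμn_top, ENNReal.mul_ne_top ENNReal.ofReal_ne_top hμn_top⟩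
    calc (μ (K n * K m)).toReal
        ≤ (μ (K n) + ENNReal.ofReal (ε / (2 * dπ)) * μ (K n)).toReal :=
          ENNReal.toReal_mono hfin h3
      _ = (μ (K n)).toReal + (ε / (2 * dπ)) * (μ (K n)).toReal := by
          rw [ENNReal.toReal_add hμn_top (ENNReal.mul_ne_top ENNReal.ofReal_ne_top hμn_top),
            ENNReal.toReal_mul, ENNReal.toReal_ofReal (by positivity)]
      _ = (1 + ε / (2 * dπ)) * (μ (K n)).toReal := by ring
  have hcard : ∀ F : Finset ↥Λ, (∀ l ∈ F, (l : G) ∈ x • K n) →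
      (F.card : ℝ) ≤ (dπ + ε) * (μ (K n)).toReal := by
    intro F hF
    have hk := key n m x F hF
    have hfac : dπ⁻¹ * gsq * (1 - ε₁) ≤ dπ⁻¹ * gsq - A⁻¹ * τ m := by
      have h1 : A⁻¹ * τ m ≤ dπ⁻¹ * gsq * ε₁ := by
        have h2 : τ m ≤ A * (dπ⁻¹ * gsq) * ε₁ := hm.le
        have h3 : A⁻¹ * τ m ≤ A⁻¹ * (A * (dπ⁻¹ * gsq) * ε₁) := by
          apply mul_le_mul_of_nonneg_left h2 (by positivity)
        calc A⁻¹ * τ m ≤ A⁻¹ * (A * (dπ⁻¹ * gsq) * ε₁) := h3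
          _ = dπ⁻¹ * gsq * ε₁ := by field_simp
      nlinarith
    have hpos : (0:ℝ) < dπ⁻¹ * gsq * (1 - ε₁) := by
      have : (0:ℝ) < 1 - ε₁ := by linarith
      positivity
    have hident : gsq * (1 + ε / (2 * dπ)) = dπ⁻¹ * gsq * (1 - ε₁) * (dπ + ε) := by
      rw [hε₁]
      field_simp
      ring
    have hRHS : gsq * (μ (K n * K m)).toReal
        ≤ dπ⁻¹ * gsq * (1 - ε₁) * ((dπ + ε) * (μ (K n)).toReal) := by
      calc gsq * (μ (K n * K m)).toReal
          ≤ gsq * ((1 + ε / (2 * dπ)) * (μ (K n)).toReal) := by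
            apply mul_le_mul_of_nonneg_left hμKK (by positivity)
        _ = gsq * (1 + ε / (2 * dπ)) * (μ (K n)).toReal := by ring
        _ = dπ⁻¹ * gsq * (1 - ε₁) * (dπ + ε) * (μ (K n)).toReal := by rw [hident]
        _ = dπ⁻¹ * gsq * (1 - ε₁) * ((dπ + ε) * (μ (K n)).toReal) := by ring
    have hk2 : (F.card : ℝ) * (dπ⁻¹ * gsq * (1 - ε₁))
        ≤ dπ⁻¹ * gsq * (1 - ε₁) * ((dπ + ε) * (μ (K n)).toReal) := by
      calc (F.card : ℝ) * (dπ⁻¹ * gsq * (1 - ε₁))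
          ≤ (F.card : ℝ) * (dπ⁻¹ * gsq - A⁻¹ * τ m) := by
            apply mul_le_mul_of_nonneg_left hfac (by positivity)
        _ ≤ gsq * (μ (K n * K m)).toReal := hk
        _ ≤ _ := hRHS
    nlinarith [hk2, hpos]
  -- conclude
  set s : Set ↥Λ := ((↑) : ↥Λ → G) ⁻¹' (x • K n) with hs
  have hsF : ∀ F : Finset ↥Λ, ↑F ⊆ s → (F.card : ℝ) ≤ (dπ + ε) * (μ (K n)).toReal :=
    fun F hF => hcard F fun l hl => hF hl
  have hsfin : s.Finite := by
    by_contra hinf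
    obtain ⟨F, hFs, hFcard⟩ := Set.Infinite.exists_subset_card_eq hinf
      (⌊(dπ + ε) * (μ (K n)).toReal⌋₊ + 1)
    have h2 : F.card ≤ ⌊(dπ + ε) * (μ (K n)).toReal⌋₊ := Nat.le_floor (hsF F hFs)
    omega
  have himg : Λ ∩ x • K n = ((↑) : ↥Λ → G) '' s := by
    ext y
    constructor
    · rintro ⟨h1, h2⟩
      exact ⟨⟨y, h1⟩, h2, rfl⟩
    · rintro ⟨l, hl, rfl⟩
      exact ⟨l.2, hl⟩
  refine ⟨himg ▸ hsfin.image _, ?_⟩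
  rw [himg, Set.ncard_image_of_injective _ Subtype.val_injective]
  rw [Set.ncard_eq_toFinset_card _ hsfin]
  exact hsF hsfin.toFinset (by simp)
end

section
/- With the same setting (polynomial growth group G of exponent D, periodic metric with δ-annular decay, strong Følner exhaustion sequence of closed balls closure(B_{r_n}), g ∈ D_{π,w_α} with α > 0), if Λ ⊆ G is such that {π(λ)g}_{λ∈Λ} is a Riesz sequence in H_π, then there exist C > 0 and N such that for all n ≥ N, sup_{x∈G} #(Λ ∩ x·closure(B_{r_n})) ≤ d_π (1 + C r_n^{−αδ/(δ+α)}) μ(closure(B_{r_n})). -/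
open MeasureTheory Pointwise Filter

set_option maxHeartbeats 4000000 in
/-- counting-function upper bound for coherent Riesz sequences on a group
of polynomial growth, over a strong Følner exhaustion sequence of closed metric balls:
`sup_x #(Λ ∩ x·cl(B_{rₙ})) ≤ d_π (1 + C rₙ^{−αδ/(δ+α)}) μ(cl(B_{rₙ}))` for `n ≫ 1`. -/
theorem coherent_riesz_counting_polynomial_growth {G H : Type*} [Group G]
    [TopologicalSpace G] [IsTopologicalGroup G] [LocallyCompactSpace G]
    [SecondCountableTopology G] [MeasurableSpace G] [BorelSpace G]
    [NormedAddCommGroup H] [InnerProductSpace ℂ H] [CompleteSpace H]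
    (μ : Measure G) [μ.IsHaarMeasure] [μ.IsMulRightInvariant]
    (π : G → H →L[ℂ] H)
    (hπnorm : ∀ (x : G) (f : H), ‖π x f‖ = ‖f‖)
    (hπproj : ∀ x y : G, ∃ c : ℂ, ‖c‖ = 1 ∧ (π x).comp (π y) = c • π (x * y))
    (hπmeas : ∀ f h : H, Measurable fun x => (inner ℂ f (π x h) : ℂ))
    (hπirr : ∀ V : Submodule ℂ H, (∀ x : G, ∀ v ∈ V, π x v ∈ V) → V ≠ ⊥ → V = ⊤)
    (dπ : ℝ) (hdπ : 0 < dπ)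
    (hortho : ∀ f h : H, ∫ x, ‖(inner ℂ f (π x h) : ℂ)‖ ^ 2 ∂μ = dπ⁻¹ * ‖f‖ ^ 2 * ‖h‖ ^ 2)
    -- a periodic metric `d` on `G` with `δ`-annular decay and polynomial growth `D`
    (d : G → G → ℝ)
    (hinv : ∀ x y z : G, d (z * x) (z * y) = d x y)
    (htri : ∀ x y z : G, d x z ≤ d x y + d y z)
    (hsymm : ∀ x y : G, d x y = d y x)
    (hnonneg : ∀ x y : G, 0 ≤ d x y)
    (D : ℝ) (hD : 0 < D)
    (δ : ℝ) (hδ : δ ∈ Set.Ioc (0 : ℝ) 1)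
    (c : ℝ) (hc : 0 < c)
    (hAD : ∀ r : ℝ, 1 ≤ r → ∀ s : ℝ, 0 < s → s ≤ r →
      μ ({x : G | d x 1 < r} \ {x : G | d x 1 < r - s})
        ≤ ENNReal.ofReal (c * (s / r) ^ δ) * μ {x : G | d x 1 < r})
    (c₁ c₂ : ℝ) (hc₁ : 0 < c₁) (hc₂ : 0 < c₂) (R₀ : ℝ) (hR₀ : 1 ≤ R₀)
    (hgrowth : ∀ r : ℝ, R₀ ≤ r →
      ENNReal.ofReal (c₁ * r ^ D) ≤ μ {x : G | d x 1 < r} ∧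
        μ {x : G | d x 1 < r} ≤ ENNReal.ofReal (c₂ * r ^ D))
    -- radii and the associated strong Følner exhaustion sequence of closed balls
    (r₀ : ℝ) (hr₀ : 0 < r₀) (hr₀nbhd : {x : G | d x 1 < r₀} ∈ nhds 1)
    (r : ℕ → ℝ) (hrpos : ∀ n, 0 < r n) (hrsep : ∀ n, r₀ < r (n + 1) - r n)
    (hKcpt : ∀ n, IsCompact (closure {x : G | d x 1 < r n}))
    (hKpos : ∀ n, 0 < μ (closure {x : G | d x 1 < r n}))
    (hK1 : ∀ n, (1 : G) ∈ closure {x : G | d x 1 < r n})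
    (hKmono : ∀ n, closure {x : G | d x 1 < r n}
      ⊆ interior (closure {x : G | d x 1 < r (n + 1)}))
    (hKexh : (⋃ n, closure {x : G | d x 1 < r n}) = Set.univ)
    (hKfolner : ∀ C : Set G, IsCompact C →
      Tendsto (fun n => μ (closure {x : G | d x 1 < r n} * C
          ∩ (closure {x : G | d x 1 < r n})ᶜ * C)
        / μ (closure {x : G | d x 1 < r n})) atTop (nhds 0))
    -- `g ∈ D_{π, w_α}` with `Q = B_{r₀}`
    (α : ℝ) (hα : 0 < α)
    (g : H)
    (hgD : ∫⁻ x, ENNReal.ofReal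
        ((⨆ z : {y : G // d y 1 < r₀}, ‖(inner ℂ g (π (x * (z : G)) g) : ℂ)‖) ^ 2
          * (1 + d x 1) ^ α) ∂μ < ⊤)
    (Λ : Set G) (A B : ℝ) (hA : 0 < A) (hAB : A ≤ B)
    (hriesz : ∀ cf : ↥Λ →₀ ℂ,
      A * ∑ l ∈ cf.support, ‖cf l‖ ^ 2
          ≤ ‖∑ l ∈ cf.support, cf l • π (l : G) g‖ ^ 2 ∧
        ‖∑ l ∈ cf.support, cf l • π (l : G) g‖ ^ 2
          ≤ B * ∑ l ∈ cf.support, ‖cf l‖ ^ 2) :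
    ∃ C > 0, ∃ N : ℕ, ∀ n ≥ N, ∀ x : G,
      (Λ ∩ x • closure {y : G | d y 1 < r n}).Finite ∧
      ((Λ ∩ x • closure {y : G | d y 1 < r n}).ncard : ℝ)
        ≤ dπ * (1 + C * r n ^ (-(α * δ / (δ + α))))
            * (μ (closure {y : G | d y 1 < r n})).toReal := by
  classical
  obtain ⟨hδ0, hδ1⟩ := hδ
  -- basic facts about the metric
  have hd_mem1 : d 1 1 < r₀ := by
    have : (1:G) ∈ {x : G | d x 1 < r₀} := mem_of_mem_nhds hr₀nbhd
    exact this
  have hdl : ∀ z a b : G, d (z * a) (z * b) = d a b := fun z a b => hinv a b z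
  -- closure of balls is contained in slightly larger balls
  have hcl : ∀ t : ℝ, closure {y : G | d y 1 < t} ⊆ {y : G | d y 1 < t + r₀} := by
    intro t y hy
    have hU : (y • {z : G | d z 1 < r₀}) ∈ nhds y := by
      simpa using smul_mem_nhds_smul y hr₀nbhd
    obtain ⟨u, hu1, hu2⟩ := mem_closure_iff_nhds.mp hy _ hU
    obtain ⟨w, hw, rfl⟩ := hu1
    have h1 : d y (y * w) = d 1 w := by
      have := hdl y 1 w; simpa using this
    have h2 : d y 1 ≤ d y (y * w) + d (y * w) 1 := htri _ _ _
    have hw' : d w 1 < r₀ := hw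
    have : d 1 w < r₀ := by rwa [hsymm]
    simp only [Set.mem_setOf_eq] at hu2 ⊢
    calc d y 1 ≤ d y (y * w) + d (y * w) 1 := h2
      _ = d 1 w + d (y * w) 1 := by rw [h1]
      _ < r₀ + t := by exact add_lt_add this hu2
      _ = t + r₀ := by ring
  -- radii grow at least linearly
  have hrlin : ∀ n : ℕ, r 0 + n * r₀ ≤ r n := by
    intro n; induction n with
    | zero => simp
    | succ k ih =>
      have := hrsep k
      push_cast
      push_cast at ih
      linarith
  have hrbig : ∀ T : ℝ, ∃ N : ℕ, ∀ n, N ≤ n → T ≤ r n := by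
    intro T
    refine ⟨⌈(T - r 0) / r₀⌉₊, fun n hn => ?_⟩
    have h1 : (T - r 0) / r₀ ≤ (n : ℝ) := by
      calc (T - r 0) / r₀ ≤ (⌈(T - r 0) / r₀⌉₊ : ℝ) := Nat.le_ceil _
        _ ≤ (n : ℝ) := by exact_mod_cast hn
    have h2 : T - r 0 ≤ n * r₀ := by
      rw [div_le_iff₀ hr₀] at h1; linarith
    linarith [hrlin n]
  -- finiteness of measures of all balls
  have hfincl : ∀ t : ℝ, μ (closure {y : G | d y 1 < t}) < ⊤ := by
    intro t
    obtain ⟨N, hN⟩ := hrbig t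
    have hsub : closure {y : G | d y 1 < t} ⊆ closure {y : G | d y 1 < r N} := by
      apply closure_mono; intro z hz
      exact lt_of_lt_of_le hz (hN N le_rfl)
    exact lt_of_le_of_lt (measure_mono hsub) (hKcpt N).measure_lt_top
  have hfinball : ∀ t : ℝ, μ {y : G | d y 1 < t} < ⊤ :=
    fun t => lt_of_le_of_lt (measure_mono subset_closure) (hfincl t)
  -- trivial case : g = 0 forces Λ = ∅
  by_cases hg0 : g = 0
  · have hΛ : Λ = ∅ := by
      by_contra hne
      obtain ⟨l, hl⟩ := Set.nonempty_iff_ne_empty.mpr hne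
      set cf : ↥Λ →₀ ℂ := Finsupp.single ⟨l, hl⟩ 1 with hcf
      have h1 := (hriesz cf).1
      have hsupp : cf.support = {⟨l, hl⟩} := Finsupp.support_single_ne_zero _ one_ne_zero
      rw [hsupp] at h1
      simp [hg0, hcf, Finsupp.single_eq_same] at h1
      linarith
    refine ⟨1, one_pos, 0, fun n _ x => ?_⟩
    rw [hΛ, Set.empty_inter]
    refine ⟨Set.finite_empty, ?_⟩
    rw [Set.ncard_empty]
    have h1 : (0:ℝ) ≤ r n ^ (-(α * δ / (δ + α))) := Real.rpow_nonneg (hrpos n).le _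
    have h2 : (0:ℝ) ≤ (μ (closure {y : G | d y 1 < r n})).toReal := ENNReal.toReal_nonneg
    push_cast
    nlinarith [mul_nonneg (mul_nonneg hdπ.le
      (show (0:ℝ) ≤ 1 + 1 * r n ^ (-(α * δ / (δ + α))) by linarith)) h2]
  -- main case
  have hgn : (0:ℝ) < ‖g‖ := norm_pos_iff.mpr hg0
  have hg2 : (0:ℝ) < ‖g‖ ^ 2 := by positivity
  -- the Riesz lower bound in Finset form
  have hlow : ∀ (S : Finset G), (↑S : Set G) ⊆ Λ → ∀ co : G → ℂ,
      A * ∑ l ∈ S, ‖co l‖ ^ 2 ≤ ‖∑ l ∈ S, co l • π l g‖ ^ 2 := by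
    intro S hS co
    have hinj : Set.InjOn (Subtype.val : ↥Λ → G) (Subtype.val ⁻¹' (S : Set G)) :=
      Subtype.val_injective.injOn
    set T : Finset ↥Λ := S.preimage Subtype.val hinj with hT
    have hφ : ∀ a : ↥Λ, (if (a : G) ∈ S then co (a : G) else 0) ≠ 0 → a ∈ T := by
      intro a ha
      by_cases h : (a : G) ∈ S
      · rw [hT, Finset.mem_preimage]; exact h
      · simp [h] at ha
    set cf : ↥Λ →₀ ℂ := Finsupp.onFinset T _ hφ with hcf
    have hsupp : cf.support ⊆ T := Finsupp.support_onFinset_subset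
    have hcfT : ∀ a : ↥Λ, a ∈ T → cf a = co (a : G) := by
      intro a ha
      have : (a : G) ∈ S := by rwa [hT, Finset.mem_preimage] at ha
      simp [hcf, Finsupp.onFinset_apply, this]
    have hrange : ∀ y ∈ S, y ∈ Set.range (Subtype.val : ↥Λ → G) := by
      intro y hy; rw [Subtype.range_coe]; exact hS hy
    have key := (hriesz cf).1
    have e1 : ∑ l ∈ cf.support, ‖cf l‖ ^ 2 = ∑ l ∈ S, ‖co l‖ ^ 2 := by
      rw [Finset.sum_subset hsupp (fun a _ ha => by
        rw [Finsupp.notMem_support_iff.mp ha]; simp)]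
      rw [Finset.sum_congr rfl (fun a ha => by rw [hcfT a ha])]
      exact Finset.sum_preimage Subtype.val S hinj (fun y => ‖co y‖ ^ 2)
        (fun y hy hyr => absurd (hrange y hy) hyr)
    have e2 : ∑ l ∈ cf.support, cf l • π (l : G) g = ∑ l ∈ S, co l • π l g := by
      rw [Finset.sum_subset hsupp (fun a _ ha => by
        rw [Finsupp.notMem_support_iff.mp ha]; simp)]
      rw [Finset.sum_congr rfl (fun a ha => by rw [hcfT a ha])]
      exact Finset.sum_preimage Subtype.val S hinj (fun y => co y • π y g)
        (fun y hy hyr => absurd (hrange y hy) hyr)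
    rw [e1, e2] at key
    exact key
  -- integrability of matrix coefficients squared
  have hint : ∀ f : H, f ≠ 0 → Integrable (fun y => ‖(inner ℂ f (π y g) : ℂ)‖ ^ 2) μ := by
    intro f hf
    by_contra hni
    have h0 := integral_undef hni
    rw [hortho f g] at h0
    have hfn : (0:ℝ) < ‖f‖ := norm_pos_iff.mpr hf
    have : (0:ℝ) < dπ⁻¹ * ‖f‖ ^ 2 * ‖g‖ ^ 2 := by positivity
    exact this.ne' h0
  -- π is projectively multiplicative: matrix coefficients translate
  have hπinj : ∀ a : G, Function.Injective (π a) := by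
    intro a u v huv
    have h1 : ‖π a (u - v)‖ = ‖u - v‖ := hπnorm a (u - v)
    rw [map_sub, huv, sub_self, norm_zero] at h1
    exact sub_eq_zero.mp (norm_eq_zero.mp h1.symm)
  obtain ⟨c0, hc0, hπ1⟩ : ∃ c0 : ℂ, ‖c0‖ = 1 ∧ ∀ v : H, π 1 v = c0 • v := by
    obtain ⟨c0, hc0, h⟩ := hπproj 1 1
    refine ⟨c0, hc0, fun v => ?_⟩
    have h1 : π 1 (π 1 v) = c0 • π 1 v := by
      have := congrArg (fun (T : H →L[ℂ] H) => T v) h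
      simpa using this
    have h2 : π 1 (π 1 v) = π 1 (c0 • v) := by
      rw [h1]; exact ((π 1).map_smul c0 v).symm
    exact hπinj 1 h2
  have hcoef : ∀ l y : G, ‖(inner ℂ (π l g) (π y g) : ℂ)‖
      = ‖(inner ℂ g (π (l⁻¹ * y) g) : ℂ)‖ := by
    intro l y
    obtain ⟨e1, he1, h1⟩ := hπproj l⁻¹ l
    obtain ⟨e2, he2, h2⟩ := hπproj l⁻¹ y
    have L : H →ₗᵢ[ℂ] H := ⟨(π l⁻¹).toLinearMap, hπnorm l⁻¹⟩
    have key : (inner ℂ (π l⁻¹ (π l g)) (π l⁻¹ (π y g)) : ℂ) = inner ℂ (π l g) (π y g) :=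
      LinearIsometry.inner_map_map ⟨(π l⁻¹).toLinearMap, hπnorm l⁻¹⟩ _ _
    have hA1 : π l⁻¹ (π l g) = (e1 * c0) • g := by
      have h3 := congrArg (fun (T : H →L[ℂ] H) => T g) h1
      simp only [ContinuousLinearMap.coe_comp', Function.comp_apply,
        ContinuousLinearMap.coe_smul', Pi.smul_apply] at h3
      rw [inv_mul_cancel] at h3
      rw [h3, hπ1 g, smul_smul]
    have hA2 : π l⁻¹ (π y g) = e2 • π (l⁻¹ * y) g := by
      have h3 := congrArg (fun (T : H →L[ℂ] H) => T g) h2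
      simpa using h3
    calc ‖(inner ℂ (π l g) (π y g) : ℂ)‖
        = ‖(inner ℂ (π l⁻¹ (π l g)) (π l⁻¹ (π y g)) : ℂ)‖ := by rw [key]
      _ = ‖(inner ℂ ((e1 * c0) • g) (e2 • π (l⁻¹ * y) g) : ℂ)‖ := by rw [hA1, hA2]
      _ = ‖(starRingEnd ℂ) (e1 * c0) * (e2 * inner ℂ g (π (l⁻¹ * y) g))‖ := by
          rw [inner_smul_left, inner_smul_right]
      _ = ‖(inner ℂ g (π (l⁻¹ * y) g) : ℂ)‖ := by
          simp [norm_mul, he1, he2, hc0]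
  -- constants
  obtain ⟨J, hJdef⟩ : ∃ J : ENNReal, J = ∫⁻ x, ENNReal.ofReal
      ((⨆ z : {y : G // d y 1 < r₀}, ‖(inner ℂ g (π (x * (z : G)) g) : ℂ)‖) ^ 2
        * (1 + d x 1) ^ α) ∂μ := ⟨_, rfl⟩
  have hJtop : J ≠ ⊤ := by rw [hJdef]; exact hgD.ne
  obtain ⟨M, hMdef⟩ : ∃ M : ℝ, M = J.toReal := ⟨_, rfl⟩
  have hM0 : (0:ℝ) ≤ M := by rw [hMdef]; exact ENNReal.toReal_nonneg
  have hαδ : (0:ℝ) < α + δ := by linarith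
  obtain ⟨κ, hκdef⟩ : ∃ κ : ℝ, κ = δ / (α + δ) := ⟨_, rfl⟩
  have hκ0 : 0 < κ := by rw [hκdef]; positivity
  have hκ1 : κ < 1 := by
    rw [hκdef, div_lt_one hαδ]; linarith
  obtain ⟨β, hβdef⟩ : ∃ β : ℝ, β = α * δ / (δ + α) := ⟨_, rfl⟩
  have hβ0 : 0 < β := by
    rw [hβdef]; positivity
  have hκα : κ * α = β := by rw [hκdef, hβdef]; field_simp; ring
  have hκ1δ : (κ - 1) * δ = -β := by rw [hκdef, hβdef]; field_simp; ring
  obtain ⟨C₁, hC₁def⟩ : ∃ C₁ : ℝ, C₁ = c * (2 + 2 * r₀) ^ δ := ⟨_, rfl⟩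
  have hC₁0 : 0 < C₁ := by
    have h : (0:ℝ) < (2 + 2*r₀) ^ δ := Real.rpow_pos_of_pos (by linarith) δ
    rw [hC₁def]; positivity
  obtain ⟨C₂, hC₂def⟩ : ∃ C₂ : ℝ, C₂ = dπ * A⁻¹ * M / ‖g‖ ^ 2 := ⟨_, rfl⟩
  have hC₂0 : 0 ≤ C₂ := by rw [hC₂def]; positivity
  obtain ⟨Cc, hCcdef⟩ : ∃ Cc : ℝ, Cc = 2 * C₁ + 4 * C₂ + 1 := ⟨_, rfl⟩
  have hCc0 : 0 < Cc := by rw [hCcdef]; positivity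
  obtain ⟨ε₀, hε₀def⟩ : ∃ ε₀ : ℝ, ε₀ = (2 * (C₁ + C₂) + 2)⁻¹ := ⟨_, rfl⟩
  have hε₀0 : 0 < ε₀ := by rw [hε₀def]; positivity
  have hε₀half : (C₁ + C₂) * ε₀ ≤ 1/2 := by
    rw [hε₀def]
    rw [mul_inv_le_iff₀ (by positivity)]
    nlinarith
  obtain ⟨N, hN⟩ := hrbig (max (max 1 (r₀ + 1)) ((ε₀⁻¹) ^ (β⁻¹)))
  refine ⟨Cc, hCc0, N, fun n hn x => ?_⟩
  -- largeness facts about ρ = r n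
  have hρ : max (max 1 (r₀ + 1)) ((ε₀⁻¹) ^ (β⁻¹)) ≤ r n := hN n hn
  have hρ1 : (1:ℝ) ≤ r n := le_trans (le_trans (le_max_left _ _) (le_max_left _ _)) hρ
  have hρ0 : (0:ℝ) < r n := hrpos n
  have hρβ : r n ^ (-β) ≤ ε₀ := by
    have h1 : (ε₀⁻¹) ^ (β⁻¹) ≤ r n := le_trans (le_max_right _ _) hρ
    have h2 : ((ε₀⁻¹) ^ (β⁻¹)) ^ β ≤ (r n) ^ β :=
      Real.rpow_le_rpow (Real.rpow_nonneg (by positivity) _) h1 hβ0.le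
    have h3 : ((ε₀⁻¹) ^ (β⁻¹)) ^ β = ε₀⁻¹ := by
      rw [← Real.rpow_mul (by positivity), inv_mul_cancel₀ hβ0.ne', Real.rpow_one]
    rw [h3] at h2
    rw [Real.rpow_neg hρ0.le]
    calc ((r n) ^ β)⁻¹ ≤ (ε₀⁻¹)⁻¹ := by
          apply inv_anti₀ (by positivity) h2
      _ = ε₀ := inv_inv _
  obtain ⟨P, hPdef⟩ : ∃ P : ℝ, P = r n ^ (-β) := ⟨_, rfl⟩
  have hP0 : 0 ≤ P := by rw [hPdef]; exact Real.rpow_nonneg hρ0.le _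
  have hPε : P ≤ ε₀ := by rw [hPdef]; exact hρβ
  have hC₁P : C₁ * P ≤ 1/2 := by
    calc C₁ * P ≤ C₁ * ε₀ := mul_le_mul_of_nonneg_left hPε hC₁0.le
      _ ≤ (C₁ + C₂) * ε₀ := mul_le_mul_of_nonneg_right (by linarith) hε₀0.le
      _ ≤ 1/2 := hε₀half
  have hC₂P : C₂ * P ≤ 1/2 := by
    calc C₂ * P ≤ C₂ * ε₀ := mul_le_mul_of_nonneg_left hPε hC₂0
      _ ≤ (C₁ + C₂) * ε₀ := mul_le_mul_of_nonneg_right (by linarith) hε₀0.le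
      _ ≤ 1/2 := hε₀half
  -- geometry of the enlarged ball
  have hρκ1 : (1:ℝ) ≤ r n ^ κ := by
    have := Real.rpow_le_rpow_of_exponent_le hρ1 hκ0.le
    simpa using this
  have hρκ0 : (0:ℝ) < r n ^ κ := by linarith
  obtain ⟨σ, hσdef⟩ : ∃ σ : ℝ, σ = r n ^ κ + 1 := ⟨_, rfl⟩
  have hσ0 : 0 < σ := by linarith
  obtain ⟨R, hRdef⟩ : ∃ R : ℝ, R = r n + (σ + r₀) := ⟨_, rfl⟩
  have hR1 : (1:ℝ) ≤ R + r₀ := by rw [hRdef]; linarith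
  -- the tail factor
  obtain ⟨τ, hτdef⟩ : ∃ τ : ℝ, τ = (1 + σ) ^ (-α) * M := ⟨_, rfl⟩
  have hτ0 : 0 ≤ τ := by
    have h : (0:ℝ) ≤ (1 + σ) ^ (-α) := Real.rpow_nonneg (by linarith) _
    rw [hτdef]; positivity
  have hτP : τ ≤ M * P := by
    have h1 : (0:ℝ) < 1 + σ := by linarith
    have h2 : r n ^ κ ≤ 1 + σ := by rw [hσdef]; linarith
    have h3 : (1 + σ) ^ (-α) ≤ (r n ^ κ) ^ (-α) := by
      rw [Real.rpow_neg h1.le, Real.rpow_neg hρκ0.le]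
      apply inv_anti₀ (Real.rpow_pos_of_pos hρκ0 _)
      exact Real.rpow_le_rpow hρκ0.le h2 hα.le
    have h4 : (r n ^ κ) ^ (-α) = P := by
      rw [hPdef, ← Real.rpow_mul hρ0.le]
      congr 1
      rw [mul_neg, hκα]
    rw [hτdef, mul_comm M, ← h4]
    exact mul_le_mul_of_nonneg_right h3 hM0
  -- the key counting bound for finite subsets
  have hkey : ∀ S : Finset G, (↑S : Set G) ⊆ Λ ∩ x • closure {y : G | d y 1 < r n} →
      (S.card : ℝ) ≤ dπ * (1 + Cc * P) * (μ (closure {y : G | d y 1 < r n})).toReal := by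
    intro S hSsub
    have hSΛ : (↑S : Set G) ⊆ Λ := fun y hy => (hSsub hy).1
    have hSK : ∀ l ∈ S, l ∈ x • closure {y : G | d y 1 < r n} := fun l hl =>
      (hSsub (Finset.mem_coe.mpr hl)).2
    have hmK0 : (0:ℝ) ≤ (μ (closure {y : G | d y 1 < r n})).toReal := ENNReal.toReal_nonneg
    rcases Finset.eq_empty_or_nonempty S with hSe | hSne
    · subst hSe
      simp only [Finset.card_empty, Nat.cast_zero]
      have h1 : (0:ℝ) ≤ Cc * P := mul_nonneg hCc0.le hP0
      have h2 : (0:ℝ) ≤ 1 + Cc * P := by linarith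
      exact mul_nonneg (mul_nonneg hdπ.le h2) hmK0
    obtain ⟨l₀, hl₀⟩ := hSne
    -- A is a lower bound for ‖g‖²
    have hAg : A ≤ ‖g‖ ^ 2 := by
      have h := hlow {l₀} (by
        intro y hy
        simp only [Finset.coe_singleton, Set.mem_singleton_iff] at hy
        subst hy
        exact hSΛ (Finset.mem_coe.mpr hl₀)) (fun _ => 1)
      simpa [hπnorm] using h
    -- the span of the coherent vectors indexed by S
    set V : Submodule ℂ H := Submodule.span ℂ (Set.range fun i : ↥S => π (i : G) g) with hVdef
    have : FiniteDimensional ℂ ↥V := FiniteDimensional.span_of_finite ℂ (Set.finite_range _)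
    -- linear independence
    have hlin : LinearIndependent ℂ (fun i : ↥S => π (i : G) g) := by
      rw [Fintype.linearIndependent_iff]
      intro cc hcc i
      obtain ⟨co, hco⟩ : ∃ co : G → ℂ, co = fun y => if h : y ∈ S then cc ⟨y, h⟩ else 0 :=
        ⟨_, rfl⟩
      have hcoS : ∀ j : ↥S, co (j : G) = cc j := by
        intro j; rw [hco]; simp only [dif_pos j.2, Subtype.coe_eta]
      have h1 : ∑ y ∈ S, co y • π y g = 0 := by
        calc ∑ y ∈ S, co y • π y g
            = ∑ j ∈ S.attach, co (j : G) • π (j : G) g := (Finset.sum_attach S _).symm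
          _ = ∑ j ∈ S.attach, cc j • π (j : G) g :=
              Finset.sum_congr rfl (fun j _ => by rw [hcoS j])
          _ = ∑ j : ↥S, cc j • π (j : G) g := by rw [← Finset.univ_eq_attach]
          _ = 0 := hcc
      have h2 := hlow S hSΛ co
      rw [h1] at h2
      simp only [norm_zero] at h2
      have h3 : ∑ y ∈ S, ‖co y‖ ^ 2 ≤ 0 := by
        have h2' : A * (∑ y ∈ S, ‖co y‖ ^ 2) ≤ A * 0 := by rw [mul_zero]; linarith
        exact le_of_mul_le_mul_left h2' hA
      have h4 : ∀ y ∈ S, ‖co y‖ ^ 2 = 0 := by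
        intro y hy
        have := Finset.sum_nonneg (fun z (_ : z ∈ S) => by positivity : ∀ z ∈ S, (0:ℝ) ≤ ‖co z‖ ^ 2)
        have h5 : ∑ y ∈ S, ‖co y‖ ^ 2 = 0 := le_antisymm h3 this
        exact (Finset.sum_eq_zero_iff_of_nonneg (fun z _ => by positivity)).mp h5 y hy
      have h6 : ‖co (i : G)‖ ^ 2 = 0 := h4 _ i.2
      have h7 : co (i : G) = 0 := by
        have := pow_eq_zero_iff (n := 2) (by norm_num) |>.mp h6
        exact norm_eq_zero.mp this
      rw [← hcoS i]
      exact h7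
    have hm : Module.finrank ℂ ↥V = S.card := by
      rw [hVdef, finrank_span_eq_card hlin, Fintype.card_coe]
    -- an orthonormal basis of V
    set m : ℕ := Module.finrank ℂ ↥V with hmdef
    set b : OrthonormalBasis (Fin m) ℂ ↥V := stdOrthonormalBasis ℂ ↥V with hbdef
    set e : Fin m → H := fun i => ((b i : ↥V) : H) with hedef
    have he : Orthonormal ℂ e := by
      have := b.orthonormal.comp_linearIsometry V.subtypeₗᵢ
      exact this
    have hei : ∀ i, ‖e i‖ = 1 := he.1
    have heint : ∀ i, Integrable (fun y => ‖(inner ℂ (e i) (π y g) : ℂ)‖ ^ 2) μ := by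
      intro i
      apply hint
      intro h0
      have := hei i
      rw [h0, norm_zero] at this
      norm_num at this
    -- the total integral of the projection density
    have h_intF : ∫ y, (∑ i : Fin m, ‖(inner ℂ (e i) (π y g) : ℂ)‖ ^ 2) ∂μ
        = (S.card : ℝ) * (dπ⁻¹ * ‖g‖ ^ 2) := by
      rw [integral_finset_sum Finset.univ (fun i _ => heint i)]
      have h1 : ∀ i : Fin m, ∫ y, ‖(inner ℂ (e i) (π y g) : ℂ)‖ ^ 2 ∂μ = dπ⁻¹ * ‖g‖ ^ 2 := by
        intro i
        rw [hortho (e i) g, hei i]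
        ring
      rw [Finset.sum_congr rfl (fun i _ => h1 i), Finset.sum_const, Finset.card_univ,
        Fintype.card_fin, hm]
      simp [nsmul_eq_mul]
    have hFint : Integrable (fun y => ∑ i : Fin m, ‖(inner ℂ (e i) (π y g) : ℂ)‖ ^ 2) μ :=
      integrable_finset_sum _ (fun i _ => heint i)
    -- projection density identities
    have hFP : ∀ w : H, (∑ i : Fin m, ‖(inner ℂ (e i) w : ℂ)‖ ^ 2)
        = ‖((V.orthogonalProjectionOnto w : ↥V) : H)‖ ^ 2 := by
      intro w
      obtain ⟨Pw, hPw⟩ : ∃ Pw : ↥V, Pw = V.orthogonalProjectionOnto w := ⟨_, rfl⟩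
      rw [← hPw]
      have h1 : ∀ i, (inner ℂ (e i) w : ℂ) = inner ℂ (e i) ((Pw : H)) := by
        intro i
        have h0 : (inner ℂ (w - ((Pw : ↥V) : H)) (e i) : ℂ) = 0 := by
          rw [hPw]
          exact V.starProjection_inner_eq_zero w (e i) (SetLike.coe_mem _)
        have h0' : (inner ℂ (e i) (w - ((Pw : ↥V) : H)) : ℂ) = 0 := by
          rw [← inner_conj_symm, h0, map_zero]
        rw [inner_sub_right] at h0'
        exact sub_eq_zero.mp h0'
      have h2 : ∀ i, (inner ℂ (e i) ((Pw : H)) : ℂ) = b.repr Pw i := by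
        intro i
        rw [b.repr_apply_apply]
        rfl
      calc ∑ i : Fin m, ‖(inner ℂ (e i) w : ℂ)‖ ^ 2
          = ∑ i : Fin m, ‖b.repr Pw i‖ ^ 2 := by
            refine Finset.sum_congr rfl (fun i _ => ?_)
            rw [h1 i, h2 i]
        _ = ‖b.repr Pw‖ ^ 2 := by
            rw [EuclideanSpace.norm_eq,
              Real.sq_sqrt (Finset.sum_nonneg fun i _ => sq_nonneg _)]
        _ = ‖(Pw : H)‖ ^ 2 := by rw [b.repr.norm_map]; rfl
    have hBessel : ∀ w : H, (∑ i : Fin m, ‖(inner ℂ (e i) w : ℂ)‖ ^ 2) ≤ ‖w‖ ^ 2 :=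
      fun w => Orthonormal.sum_inner_products_le w he
    -- the dual Riesz bound for the projection
    have hdual : ∀ w : H, ‖((V.orthogonalProjectionOnto w : ↥V) : H)‖ ^ 2
        ≤ A⁻¹ * ∑ l ∈ S, ‖(inner ℂ (π l g) w : ℂ)‖ ^ 2 := by
      intro w
      obtain ⟨Pw, hPw⟩ : ∃ Pw : ↥V, Pw = V.orthogonalProjectionOnto w := ⟨_, rfl⟩
      rw [← hPw]
      have hmem : ((Pw : ↥V) : H) ∈ Submodule.span ℂ (Set.range fun i : ↥S => π (i : G) g) := by
        rw [hPw]; exact SetLike.coe_mem _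
      obtain ⟨cc, hcc⟩ := (Submodule.mem_span_range_iff_exists_fun ℂ).mp hmem
      obtain ⟨co, hco⟩ : ∃ co : G → ℂ, co = fun y => if h : y ∈ S then cc ⟨y, h⟩ else 0 :=
        ⟨_, rfl⟩
      have hcoS : ∀ j : ↥S, co (j : G) = cc j := by
        intro j; rw [hco]; simp only [dif_pos j.2, Subtype.coe_eta]
      have hsum : ∑ y ∈ S, co y • π y g = ((Pw : ↥V) : H) := by
        calc ∑ y ∈ S, co y • π y g
            = ∑ j ∈ S.attach, co (j : G) • π (j : G) g := (Finset.sum_attach S _).symm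
          _ = ∑ j ∈ S.attach, cc j • π (j : G) g :=
              Finset.sum_congr rfl (fun j _ => by rw [hcoS j])
          _ = ∑ j : ↥S, cc j • π (j : G) g := by rw [← Finset.univ_eq_attach]
          _ = ((Pw : ↥V) : H) := hcc
      obtain ⟨X, hX⟩ : ∃ X : ℝ, X = ‖((Pw : ↥V) : H)‖ ^ 2 := ⟨_, rfl⟩
      rw [← hX]
      have hX0 : (0:ℝ) ≤ X := by rw [hX]; exact sq_nonneg _
      obtain ⟨TT, hTT⟩ : ∃ TT : ℝ, TT = ∑ l ∈ S, ‖(inner ℂ (π l g) w : ℂ)‖ ^ 2 := ⟨_, rfl⟩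
      rw [← hTT]
      have hTT0 : (0:ℝ) ≤ TT := by
        rw [hTT]; exact Finset.sum_nonneg (fun l _ => sq_nonneg _)
      have hco0 : (0:ℝ) ≤ ∑ y ∈ S, ‖co y‖ ^ 2 := Finset.sum_nonneg fun y _ => sq_nonneg _
      -- ⟪Pw, w⟫ has norm X
      have hip : ‖(inner ℂ (((Pw : ↥V) : H)) w : ℂ)‖ = X := by
        have h0 : (inner ℂ (w - ((Pw : ↥V) : H)) (((Pw : ↥V) : H)) : ℂ) = 0 := by
          rw [hPw]
          exact V.starProjection_inner_eq_zero w _ (SetLike.coe_mem _)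
        rw [inner_sub_left] at h0
        have h1 : (inner ℂ w (((Pw : ↥V) : H)) : ℂ) = inner ℂ (((Pw : ↥V) : H)) (((Pw : ↥V) : H)) :=
          sub_eq_zero.mp h0
        have h2 : (inner ℂ (((Pw : ↥V) : H)) w : ℂ)
            = (starRingEnd ℂ) (inner ℂ w (((Pw : ↥V) : H)) : ℂ) := (inner_conj_symm _ _).symm
        rw [h2, h1, inner_self_eq_norm_sq_to_K, hX]
        simp
      -- Cauchy–Schwarz on the coefficient expansion
      have hXle : X ≤ Real.sqrt (∑ y ∈ S, ‖co y‖ ^ 2) * Real.sqrt TT := by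
        have h3 : (inner ℂ (((Pw : ↥V) : H)) w : ℂ)
            = ∑ y ∈ S, (starRingEnd ℂ) (co y) * inner ℂ (π y g) w := by
          rw [← hsum, sum_inner]
          exact Finset.sum_congr rfl (fun y _ => inner_smul_left _ _ _)
        have h4 : ‖(inner ℂ (((Pw : ↥V) : H)) w : ℂ)‖
            ≤ ∑ y ∈ S, ‖co y‖ * ‖(inner ℂ (π y g) w : ℂ)‖ := by
          rw [h3]
          refine le_trans (norm_sum_le _ _) (Finset.sum_le_sum fun y _ => ?_)
          rw [norm_mul, RCLike.norm_conj]
        have h5 : (∑ y ∈ S, ‖co y‖ * ‖(inner ℂ (π y g) w : ℂ)‖) ^ 2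
            ≤ (∑ y ∈ S, ‖co y‖ ^ 2) * TT := by
          rw [hTT]
          exact Finset.sum_mul_sq_le_sq_mul_sq S _ _
        have h6 : 0 ≤ ∑ y ∈ S, ‖co y‖ * ‖(inner ℂ (π y g) w : ℂ)‖ :=
          Finset.sum_nonneg fun y _ => mul_nonneg (norm_nonneg _) (norm_nonneg _)
        have h7 : ∑ y ∈ S, ‖co y‖ * ‖(inner ℂ (π y g) w : ℂ)‖
            ≤ Real.sqrt ((∑ y ∈ S, ‖co y‖ ^ 2) * TT) :=
          (Real.le_sqrt h6 (mul_nonneg hco0 hTT0)).mpr h5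
        rw [← hip]
        calc ‖(inner ℂ (((Pw : ↥V) : H)) w : ℂ)‖
            ≤ ∑ y ∈ S, ‖co y‖ * ‖(inner ℂ (π y g) w : ℂ)‖ := h4
          _ ≤ Real.sqrt ((∑ y ∈ S, ‖co y‖ ^ 2) * TT) := h7
          _ = Real.sqrt (∑ y ∈ S, ‖co y‖ ^ 2) * Real.sqrt TT := Real.sqrt_mul hco0 _
      have hAco : A * ∑ y ∈ S, ‖co y‖ ^ 2 ≤ X := by
        have h := hlow S hSΛ co
        rw [hsum, ← hX] at h
        exact h
      -- conclude
      rcases eq_or_lt_of_le hX0 with hX0' | hX0'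
      · rw [← hX0']
        exact mul_nonneg (inv_nonneg.mpr hA.le) hTT0
      · have h8 : X ^ 2 ≤ (∑ y ∈ S, ‖co y‖ ^ 2) * TT := by
          have hmm := mul_le_mul hXle hXle hX0
            (mul_nonneg (Real.sqrt_nonneg _) (Real.sqrt_nonneg _))
          calc X ^ 2 = X * X := sq X
            _ ≤ (Real.sqrt (∑ y ∈ S, ‖co y‖ ^ 2) * Real.sqrt TT)
                * (Real.sqrt (∑ y ∈ S, ‖co y‖ ^ 2) * Real.sqrt TT) := hmm
            _ = (Real.sqrt (∑ y ∈ S, ‖co y‖ ^ 2) * Real.sqrt (∑ y ∈ S, ‖co y‖ ^ 2))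
                * (Real.sqrt TT * Real.sqrt TT) := by ring
            _ = (∑ y ∈ S, ‖co y‖ ^ 2) * TT := by
                rw [Real.mul_self_sqrt hco0, Real.mul_self_sqrt hTT0]
        have h9 : X ^ 2 ≤ (A⁻¹ * X) * TT := by
          refine le_trans h8 (mul_le_mul_of_nonneg_right ?_ hTT0)
          rw [le_inv_mul_iff₀ hA]
          exact hAco
        have h10 : X * X ≤ (A⁻¹ * TT) * X := by
          calc X * X = X ^ 2 := (sq X).symm
            _ ≤ (A⁻¹ * X) * TT := h9
            _ = (A⁻¹ * TT) * X := by ring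
        exact le_of_mul_le_mul_right h10 hX0'
    -- the enlarged set E and splitting of the integral
    obtain ⟨E, hEdef⟩ : ∃ E : Set G, E = x • closure {y : G | d y 1 < R} := ⟨_, rfl⟩
    have hEmeas : MeasurableSet E := by
      rw [hEdef]; exact (isClosed_closure.smul x).measurableSet
    have hμE : μ E = μ (closure {y : G | d y 1 < R}) := by
      rw [hEdef]; exact measure_smul μ x _
    have hμE_lt : μ E < ⊤ := by rw [hμE]; exact hfincl R
    have hsplit : (∫ y in E, (∑ i : Fin m, ‖(inner ℂ (e i) (π y g) : ℂ)‖ ^ 2) ∂μ)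
        + (∫ y in Eᶜ, (∑ i : Fin m, ‖(inner ℂ (e i) (π y g) : ℂ)‖ ^ 2) ∂μ)
        = (S.card : ℝ) * (dπ⁻¹ * ‖g‖ ^ 2) := by
      rw [integral_add_compl hEmeas hFint, h_intF]
    -- the bulk term
    have hup : (∫ y in E, (∑ i : Fin m, ‖(inner ℂ (e i) (π y g) : ℂ)‖ ^ 2) ∂μ)
        ≤ ‖g‖ ^ 2 * (μ E).toReal := by
      have h1 : ∀ y ∈ E, (∑ i : Fin m, ‖(inner ℂ (e i) (π y g) : ℂ)‖ ^ 2) ≤ ‖g‖ ^ 2 := by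
        intro y _
        have := hBessel (π y g)
        rwa [hπnorm] at this
      calc (∫ y in E, (∑ i : Fin m, ‖(inner ℂ (e i) (π y g) : ℂ)‖ ^ 2) ∂μ)
          ≤ ∫ _ in E, ‖g‖ ^ 2 ∂μ := setIntegral_mono_on hFint.integrableOn
            (integrableOn_const hμE_lt.ne) hEmeas h1
        _ = (μ E).toReal * ‖g‖ ^ 2 := by rw [setIntegral_const]; simp [smul_eq_mul, Measure.real]
        _ = ‖g‖ ^ 2 * (μ E).toReal := by ring
    -- the tail term, coefficient by coefficient
    have htail : ∀ l ∈ S, (∫ y in Eᶜ, ‖(inner ℂ (π l g) (π y g) : ℂ)‖ ^ 2 ∂μ) ≤ τ := by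
      intro l hl
      have hlK : d (x⁻¹ * l) 1 < r n + r₀ := by
        have h1 := hSK l hl
        rw [Set.mem_smul_set_iff_inv_smul_mem] at h1
        exact hcl (r n) h1
      obtain ⟨T, hTdef⟩ : ∃ T : Set G, T = (fun z => l * z) ⁻¹' Eᶜ := ⟨_, rfl⟩
      have hTmeas : MeasurableSet T := by
        rw [hTdef]; exact hEmeas.compl.preimage (measurable_const_mul l)
      have hTd : ∀ z ∈ T, σ ≤ d z 1 := by
        intro z hz
        rw [hTdef] at hz
        have hz' : l * z ∈ Eᶜ := hz
        by_contra hzc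
        push_neg at hzc
        apply hz'
        rw [hEdef]
        refine Set.mem_smul_set_iff_inv_smul_mem.mpr ?_
        apply subset_closure
        simp only [smul_eq_mul, Set.mem_setOf_eq]
        have e1 : d (x⁻¹ * (l * z)) 1 ≤ d (x⁻¹ * (l * z)) (x⁻¹ * l) + d (x⁻¹ * l) 1 :=
          htri _ _ _
        have e2 : d (x⁻¹ * (l * z)) (x⁻¹ * l) = d z 1 := by
          have h3 : x⁻¹ * (l * z) = (x⁻¹ * l) * z := by group
          have h4 : x⁻¹ * l = (x⁻¹ * l) * 1 := (mul_one _).symm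
          rw [h3]
          nth_rewrite 2 [h4]
          exact hdl (x⁻¹ * l) z 1
        rw [hRdef]
        rw [e2] at e1
        linarith only [e1, hzc, hlK]
      -- change variables y = l z
      have hcv : (∫ y in Eᶜ, ‖(inner ℂ (π l g) (π y g) : ℂ)‖ ^ 2 ∂μ)
          = ∫ z in T, ‖(inner ℂ g (π z g) : ℂ)‖ ^ 2 ∂μ := by
        have h1 : (fun y => ‖(inner ℂ (π l g) (π y g) : ℂ)‖ ^ 2)
            = fun y => ‖(inner ℂ g (π (l⁻¹ * y) g) : ℂ)‖ ^ 2 := by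
          funext y; rw [hcoef l y]
        rw [h1]
        have hmp : MeasurePreserving (fun z : G => l⁻¹ * z) μ μ :=
          measurePreserving_mul_left μ l⁻¹
        have hemb : MeasurableEmbedding (fun z : G => l⁻¹ * z) :=
          (Homeomorph.mulLeft l⁻¹).toMeasurableEquiv.measurableEmbedding
        have hpre : (fun z : G => l⁻¹ * z) ⁻¹' T = Eᶜ := by
          rw [hTdef]; ext z
          simp [Set.mem_preimage]
        rw [← hpre]
        exact hmp.setIntegral_preimage_emb hemb (fun z => ‖(inner ℂ g (π z g) : ℂ)‖ ^ 2) T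
      rw [hcv]
      have hq : Measurable (fun z => ‖(inner ℂ g (π z g) : ℂ)‖ ^ 2) :=
        ((hπmeas g g).norm).pow_const 2
      have h2 : (∫ z in T, ‖(inner ℂ g (π z g) : ℂ)‖ ^ 2 ∂μ)
          = (∫⁻ z in T, ENNReal.ofReal (‖(inner ℂ g (π z g) : ℂ)‖ ^ 2) ∂μ).toReal := by
        apply integral_eq_lintegral_of_nonneg_ae
        · exact Filter.Eventually.of_forall fun z => sq_nonneg _
        · exact hq.aestronglyMeasurable
      have h1σ : (0:ℝ) < 1 + σ := by linarith only [hσ0]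
      have h3 : (∫⁻ z in T, ENNReal.ofReal (‖(inner ℂ g (π z g) : ℂ)‖ ^ 2) ∂μ)
          ≤ ENNReal.ofReal ((1 + σ) ^ (-α)) * J := by
        have hstep : (∫⁻ z in T, ENNReal.ofReal (‖(inner ℂ g (π z g) : ℂ)‖ ^ 2) ∂μ)
            ≤ ∫⁻ z in T, ENNReal.ofReal ((1 + σ) ^ (-α))
                * ENNReal.ofReal (‖(inner ℂ g (π z g) : ℂ)‖ ^ 2 * (1 + d z 1) ^ α) ∂μ := by
          refine lintegral_mono_ae ?_
          filter_upwards [ae_restrict_mem hTmeas] with z hz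
          rw [← ENNReal.ofReal_mul (Real.rpow_nonneg h1σ.le _)]
          apply ENNReal.ofReal_le_ofReal
          have hw : (1 + σ) ^ α ≤ (1 + d z 1) ^ α :=
            Real.rpow_le_rpow h1σ.le (by linarith only [hTd z hz]) hα.le
          have hcan : (1 + σ) ^ (-α) * (1 + σ) ^ α = 1 := by
            rw [← Real.rpow_add h1σ]; simp
          calc ‖(inner ℂ g (π z g) : ℂ)‖ ^ 2
              = ((1 + σ) ^ (-α) * (1 + σ) ^ α) * ‖(inner ℂ g (π z g) : ℂ)‖ ^ 2 := by
                rw [hcan, one_mul]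
            _ = (1 + σ) ^ (-α) * ((1 + σ) ^ α * ‖(inner ℂ g (π z g) : ℂ)‖ ^ 2) := by ring
            _ ≤ (1 + σ) ^ (-α) * (‖(inner ℂ g (π z g) : ℂ)‖ ^ 2 * (1 + d z 1) ^ α) := by
                refine mul_le_mul_of_nonneg_left ?_ (Real.rpow_nonneg h1σ.le _)
                rw [mul_comm]
                exact mul_le_mul_of_nonneg_left hw (sq_nonneg _)
        refine hstep.trans ?_
        rw [lintegral_const_mul' _ _ ENNReal.ofReal_ne_top]
        refine mul_le_mul_right ?_ _
        refine le_trans (setLIntegral_le_lintegral T _) ?_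
        rw [hJdef]
        refine lintegral_mono fun z => ?_
        apply ENNReal.ofReal_le_ofReal
        have hbdd : BddAbove (Set.range fun w : {y : G // d y 1 < r₀}
            => ‖(inner ℂ g (π (z * (w : G)) g) : ℂ)‖) := by
          refine ⟨‖g‖ * ‖g‖, ?_⟩
          rintro v ⟨w, rfl⟩
          exact le_trans (norm_inner_le_norm _ _) (by rw [hπnorm])
        have h5 : ‖(inner ℂ g (π z g) : ℂ)‖
            ≤ ⨆ w : {y : G // d y 1 < r₀}, ‖(inner ℂ g (π (z * (w : G)) g) : ℂ)‖ := by
          have := le_ciSup hbdd (⟨1, hd_mem1⟩ : {y : G // d y 1 < r₀})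
          simpa using this
        have h6 : ‖(inner ℂ g (π z g) : ℂ)‖ ^ 2
            ≤ (⨆ w : {y : G // d y 1 < r₀}, ‖(inner ℂ g (π (z * (w : G)) g) : ℂ)‖) ^ 2 :=
          pow_le_pow_left₀ (norm_nonneg _) h5 2
        exact mul_le_mul_of_nonneg_right h6
          (Real.rpow_nonneg (by linarith only [hnonneg z 1]) _)
      rw [h2, hτdef]
      have h7 : (ENNReal.ofReal ((1 + σ) ^ (-α)) * J).toReal = (1 + σ) ^ (-α) * M := by
        rw [ENNReal.toReal_mul, ENNReal.toReal_ofReal (Real.rpow_nonneg h1σ.le _), hMdef]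
      rw [← h7]
      exact ENNReal.toReal_mono (ENNReal.mul_ne_top ENNReal.ofReal_ne_top hJtop) h3
    -- the comparison term over the complement
    have hcomp : (∫ y in Eᶜ, (∑ i : Fin m, ‖(inner ℂ (e i) (π y g) : ℂ)‖ ^ 2) ∂μ)
        ≤ A⁻¹ * ((S.card : ℝ) * τ) := by
      have hqint : ∀ l ∈ S, Integrable (fun y => ‖(inner ℂ (π l g) (π y g) : ℂ)‖ ^ 2) μ := by
        intro l _
        apply hint
        intro h0
        have h1 := hπnorm l g
        rw [h0, norm_zero] at h1
        exact hgn.ne' h1.symm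
      have hGint : Integrable (fun y => A⁻¹ * ∑ l ∈ S, ‖(inner ℂ (π l g) (π y g) : ℂ)‖ ^ 2) μ :=
        (integrable_finset_sum S (fun l hl => hqint l hl)).const_mul _
      have h1 : (∫ y in Eᶜ, (∑ i : Fin m, ‖(inner ℂ (e i) (π y g) : ℂ)‖ ^ 2) ∂μ)
          ≤ ∫ y in Eᶜ, A⁻¹ * ∑ l ∈ S, ‖(inner ℂ (π l g) (π y g) : ℂ)‖ ^ 2 ∂μ := by
        refine setIntegral_mono_on hFint.integrableOn hGint.integrableOn hEmeas.compl ?_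
        intro y _
        rw [hFP (π y g)]
        exact hdual (π y g)
      refine h1.trans ?_
      rw [integral_const_mul]
      refine mul_le_mul_of_nonneg_left ?_ (inv_nonneg.mpr hA.le)
      rw [integral_finset_sum S (fun l hl => (hqint l hl).integrableOn)]
      calc ∑ l ∈ S, ∫ y in Eᶜ, ‖(inner ℂ (π l g) (π y g) : ℂ)‖ ^ 2 ∂μ
          ≤ ∑ _l ∈ S, τ := Finset.sum_le_sum (fun l hl => htail l hl)
        _ = (S.card : ℝ) * τ := by rw [Finset.sum_const]; simp [nsmul_eq_mul]
    -- annular decay: the enlarged ball has nearly the same measure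
    obtain ⟨mK, hmKdef⟩ : ∃ mK : ℝ, mK = (μ (closure {y : G | d y 1 < r n})).toReal := ⟨_, rfl⟩
    have hmK0' : 0 ≤ mK := by rw [hmKdef]; exact ENNReal.toReal_nonneg
    obtain ⟨aB, haBdef⟩ : ∃ aB : ℝ, aB = (μ {y : G | d y 1 < R + r₀}).toReal := ⟨_, rfl⟩
    have haB0 : 0 ≤ aB := by rw [haBdef]; exact ENNReal.toReal_nonneg
    have haB_fin : μ {y : G | d y 1 < R + r₀} ≠ ⊤ := (hfinball _).ne
    have hEB : (μ E).toReal ≤ aB := by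
      rw [haBdef]
      apply ENNReal.toReal_mono haB_fin
      rw [hμE]
      exact measure_mono (hcl R)
    obtain ⟨θ, hθdef⟩ : ∃ θ : ℝ, θ = c * ((σ + 2 * r₀) / (R + r₀)) ^ δ := ⟨_, rfl⟩
    have hθ0 : 0 ≤ θ := by
      rw [hθdef]
      exact mul_nonneg hc.le (Real.rpow_nonneg (div_nonneg
        (by linarith only [hσ0, hr₀]) (by linarith only [hR1])) _)
    have hAD1 := hAD (R + r₀) hR1 (σ + 2 * r₀) (by linarith only [hσ0, hr₀])
      (by rw [hRdef]; linarith only [hρ0])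
    have hRr : R + r₀ - (σ + 2 * r₀) = r n := by rw [hRdef]; ring
    rw [hRr] at hAD1
    have hann : aB ≤ mK + θ * aB := by
      have h1 : μ {y : G | d y 1 < R + r₀}
          ≤ μ (closure {y : G | d y 1 < r n})
            + ENNReal.ofReal θ * μ {y : G | d y 1 < R + r₀} := by
        calc μ {y : G | d y 1 < R + r₀}
            ≤ μ ({y : G | d y 1 < R + r₀} ∩ {y : G | d y 1 < r n})
              + μ ({y : G | d y 1 < R + r₀} \ {y : G | d y 1 < r n}) :=
              measure_le_inter_add_diff μ _ _
          _ ≤ μ (closure {y : G | d y 1 < r n})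
              + ENNReal.ofReal θ * μ {y : G | d y 1 < R + r₀} := by
              refine add_le_add (measure_mono ?_) ?_
              · exact Set.inter_subset_right.trans subset_closure
              · rw [hθdef]; exact hAD1
      have hfin1 : μ (closure {y : G | d y 1 < r n}) ≠ ⊤ := (hfincl _).ne
      have hfin2 : ENNReal.ofReal θ * μ {y : G | d y 1 < R + r₀} ≠ ⊤ :=
        ENNReal.mul_ne_top ENNReal.ofReal_ne_top haB_fin
      have h2 := ENNReal.toReal_mono (by
        rw [ENNReal.add_ne_top]; exact ⟨hfin1, hfin2⟩) h1
      rw [ENNReal.toReal_add hfin1 hfin2, ENNReal.toReal_mul,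
        ENNReal.toReal_ofReal hθ0] at h2
      rw [haBdef, hmKdef]
      exact h2
    -- bound θ by C₁ * P
    have hθP : θ ≤ C₁ * P := by
      have hfrac1 : (σ + 2 * r₀) / (R + r₀) ≤ (σ + 2 * r₀) / r n :=
        div_le_div_of_nonneg_left (by linarith only [hσ0, hr₀]) hρ0
          (by rw [hRdef]; linarith only [hσ0, hr₀])
      have hfrac2 : (σ + 2 * r₀) / r n ≤ (2 + 2 * r₀) * r n ^ κ / r n := by
        refine (div_le_div_iff_of_pos_right hρ0).mpr ?_
        have h := mul_le_mul_of_nonneg_left hρκ1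
          (by linarith only [hr₀] : (0:ℝ) ≤ 1 + 2 * r₀)
        rw [hσdef]
        linarith only [h]
      have hfrac3 : (2 + 2 * r₀) * r n ^ κ / r n = (2 + 2 * r₀) * r n ^ (κ - 1) := by
        rw [Real.rpow_sub hρ0, Real.rpow_one]; ring
      have hbase0 : 0 ≤ (σ + 2 * r₀) / (R + r₀) :=
        div_nonneg (by linarith only [hσ0, hr₀]) (by linarith only [hR1])
      have h1 : ((σ + 2 * r₀) / (R + r₀)) ^ δ ≤ ((2 + 2 * r₀) * r n ^ (κ - 1)) ^ δ := by
        apply Real.rpow_le_rpow hbase0 ?_ hδ0.le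
        rw [← hfrac3]
        exact hfrac1.trans hfrac2
      have h2 : ((2 + 2 * r₀) * r n ^ (κ - 1)) ^ δ
          = (2 + 2 * r₀) ^ δ * r n ^ ((κ - 1) * δ) := by
        rw [Real.mul_rpow (by linarith only [hr₀]) (Real.rpow_nonneg hρ0.le _),
          ← Real.rpow_mul hρ0.le]
      rw [hθdef, hPdef]
      calc c * ((σ + 2 * r₀) / (R + r₀)) ^ δ
          ≤ c * ((2 + 2 * r₀) ^ δ * r n ^ ((κ - 1) * δ)) := by
            rw [← h2]
            exact mul_le_mul_of_nonneg_left h1 hc.le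
        _ = C₁ * r n ^ ((κ - 1) * δ) := by rw [hC₁def]; ring
        _ = C₁ * r n ^ (-β) := by rw [hκ1δ]
    -- assemble the pieces
    obtain ⟨nn, hnn⟩ : ∃ nn : ℝ, nn = (S.card : ℝ) := ⟨_, rfl⟩
    have hnn0 : 0 ≤ nn := by rw [hnn]; positivity
    have hmain : nn * (dπ⁻¹ * ‖g‖ ^ 2) ≤ ‖g‖ ^ 2 * (μ E).toReal + A⁻¹ * (nn * τ) := by
      rw [hnn]; linarith only [hsplit, hup, hcomp]
    obtain ⟨η, hη⟩ : ∃ η : ℝ, η = dπ * A⁻¹ * τ / ‖g‖ ^ 2 := ⟨_, rfl⟩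
    have hη0 : 0 ≤ η := by
      rw [hη]
      exact div_nonneg (mul_nonneg (mul_nonneg hdπ.le (inv_nonneg.mpr hA.le)) hτ0) hg2.le
    have hmain2 : nn ≤ dπ * (μ E).toReal + η * nn := by
      have e2 : nn = (dπ / ‖g‖ ^ 2) * (nn * (dπ⁻¹ * ‖g‖ ^ 2)) := by
        field_simp
      have e3 : dπ * (μ E).toReal + η * nn
          = (dπ / ‖g‖ ^ 2) * (‖g‖ ^ 2 * (μ E).toReal + A⁻¹ * (nn * τ)) := by
        rw [hη]; field_simp
      calc nn = (dπ / ‖g‖ ^ 2) * (nn * (dπ⁻¹ * ‖g‖ ^ 2)) := e2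
        _ ≤ (dπ / ‖g‖ ^ 2) * (‖g‖ ^ 2 * (μ E).toReal + A⁻¹ * (nn * τ)) :=
            mul_le_mul_of_nonneg_left hmain (by positivity)
        _ = dπ * (μ E).toReal + η * nn := e3.symm
    have hηC : η ≤ C₂ * P := by
      have hco : (0:ℝ) ≤ dπ * A⁻¹ / ‖g‖ ^ 2 :=
        div_nonneg (mul_nonneg hdπ.le (inv_nonneg.mpr hA.le)) hg2.le
      have h := mul_le_mul_of_nonneg_left hτP hco
      rw [hη, hC₂def]
      calc dπ * A⁻¹ * τ / ‖g‖ ^ 2 = (dπ * A⁻¹ / ‖g‖ ^ 2) * τ := by ring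
        _ ≤ (dπ * A⁻¹ / ‖g‖ ^ 2) * (M * P) := h
        _ = dπ * A⁻¹ * M / ‖g‖ ^ 2 * P := by ring
    have hθhalf : θ ≤ 1 / 2 := hθP.trans hC₁P
    have hηhalf : η ≤ 1 / 2 := hηC.trans hC₂P
    have hann2 : aB ≤ 2 * mK := by
      have h1 : θ * aB ≤ (1 / 2) * aB := mul_le_mul_of_nonneg_right hθhalf haB0
      linarith only [hann, h1]
    have hann3 : aB ≤ mK + (C₁ * P) * (2 * mK) := by
      have h1 : θ * aB ≤ (C₁ * P) * (2 * mK) :=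
        mul_le_mul hθP hann2 haB0 (mul_nonneg hC₁0.le hP0)
      linarith only [hann, h1]
    have hEmK : (μ E).toReal ≤ mK + (C₁ * P) * (2 * mK) := le_trans hEB hann3
    have hu2 : (μ E).toReal ≤ 2 * mK := hEB.trans hann2
    have hnn2 : nn ≤ 2 * (dπ * (μ E).toReal) := by
      have h1 : η * nn ≤ (1 / 2) * nn := mul_le_mul_of_nonneg_right hηhalf hnn0
      linarith only [hmain2, h1]
    have hnn3 : nn ≤ dπ * (μ E).toReal + (C₂ * P) * (2 * (dπ * (μ E).toReal)) := by
      have h1 : η * nn ≤ (C₂ * P) * (2 * (dπ * (μ E).toReal)) :=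
        mul_le_mul hηC hnn2 hnn0 (mul_nonneg hC₂0 hP0)
      linarith only [hmain2, h1]
    have s1 : dπ * (μ E).toReal ≤ dπ * mK + 2 * C₁ * (dπ * mK * P) := by
      have h := mul_le_mul_of_nonneg_left hEmK hdπ.le
      calc dπ * (μ E).toReal ≤ dπ * (mK + (C₁ * P) * (2 * mK)) := h
        _ = dπ * mK + 2 * C₁ * (dπ * mK * P) := by ring
    have s2 : (C₂ * P) * (2 * (dπ * (μ E).toReal)) ≤ 4 * C₂ * (dπ * mK * P) := by
      have hco : (0:ℝ) ≤ 2 * C₂ * P * dπ :=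
        mul_nonneg (mul_nonneg (mul_nonneg (by norm_num) hC₂0) hP0) hdπ.le
      calc (C₂ * P) * (2 * (dπ * (μ E).toReal))
          = (2 * C₂ * P * dπ) * (μ E).toReal := by ring
        _ ≤ (2 * C₂ * P * dπ) * (2 * mK) := mul_le_mul_of_nonneg_left hu2 hco
        _ = 4 * C₂ * (dπ * mK * P) := by ring
    have s3 : nn ≤ dπ * mK + 2 * C₁ * (dπ * mK * P) + 4 * C₂ * (dπ * mK * P) := by
      linarith only [hnn3, s1, s2]
    have k4 : 0 ≤ dπ * mK * P := mul_nonneg (mul_nonneg hdπ.le hmK0') hP0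
    have s4 : dπ * (1 + Cc * P) * mK
        = dπ * mK + 2 * C₁ * (dπ * mK * P) + 4 * C₂ * (dπ * mK * P) + dπ * mK * P := by
      rw [hCcdef]; ring
    rw [← hnn, ← hmKdef, s4]
    linarith only [s3, k4]
  -- conclude: finiteness and the cardinality bound
  have hfin : (Λ ∩ x • closure {y : G | d y 1 < r n}).Finite := by
    by_contra hinf
    obtain ⟨S, hSsub, hScard⟩ := Set.Infinite.exists_subset_card_eq hinf
      (⌈dπ * (1 + Cc * P) * (μ (closure {y : G | d y 1 < r n})).toReal⌉₊ + 1)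
    have h1 := hkey S hSsub
    rw [hScard] at h1
    have h2 := Nat.le_ceil (dπ * (1 + Cc * P) * (μ (closure {y : G | d y 1 < r n})).toReal)
    push_cast at h1
    linarith only [h1, h2]
  refine ⟨hfin, ?_⟩
  have h3 := hkey hfin.toFinset (by rw [Set.Finite.coe_toFinset])
  have h4 : (Λ ∩ x • closure {y : G | d y 1 < r n}).ncard = hfin.toFinset.card :=
    Set.ncard_eq_toFinset_card _ hfin
  rw [h4]
  rw [hPdef, hβdef] at h3
  exact h3
end

section
/- Let G be a group of polynomial growth of exponent D with a periodic metric satisfying the δ-annular decay property, r_0 > 1 with B_{r_0} containing a unit neighborhood, Q = B_{r_0}, and α > 1 − δ. If g ∈ H_π is nonzero with |⟨g, π(x)g⟩|/‖g‖² ≤ C_0 (1+|x|)^{−(D+α)/2} for all x ∈ G, then there is a constant C'' = C''(G, α, r_0, δ) > 0 such that for every r > r_0, ∫_{(G \ B_r) B_{r_0}} |M_Q V_g g(x)|² dμ(x) ≤ C_0² ‖g‖⁴ C'' r^{1−δ−α}. -/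
open MeasureTheory Pointwise

open ENNReal

lemma aux_setLIntegral_le {α : Type*} [MeasurableSpace α] (μ : Measure α) (s : Set α)
    (f : α → ℝ≥0∞) (C : ℝ≥0∞) (h : ∀ x ∈ s, f x ≤ C) :
    ∫⁻ x in s, f x ∂μ ≤ C * μ s := by
  rw [← iSup_lintegral_measurable_le_eq_lintegral]
  refine iSup_le fun g => iSup_le fun hg => iSup_le fun hgf => ?_
  have hae : ∀ᵐ x ∂(μ.restrict s), g x ≤ C := by
    rw [Filter.eventually_iff, mem_ae_iff]
    have hmeas : MeasurableSet {x | g x ≤ C}ᶜ := (measurableSet_le hg measurable_const).compl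
    rw [Measure.restrict_apply hmeas]
    have : {x | g x ≤ C}ᶜ ∩ s = ∅ := by
      ext x
      simp only [Set.mem_inter_iff, Set.mem_compl_iff, Set.mem_setOf_eq, Set.mem_empty_iff_false,
        iff_false, not_and]
      intro hgx hxs
      exact hgx ((hgf x).trans (h x hxs))
    rw [this]; exact measure_empty
  calc ∫⁻ x in s, g x ∂μ ≤ ∫⁻ _ in s, C ∂μ := lintegral_mono_ae hae
    _ = C * μ s := setLIntegral_const s C

lemma aux_bern {γ : ℝ} (hγ : 0 < γ) {x : ℝ} (hx : 0 < x) :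
    γ * (x + 1) ^ (-(γ + 1)) ≤ x ^ (-γ) - (x + 1) ^ (-γ) := by
  have hx1 : (0:ℝ) < x + 1 := by linarith
  have hA : (0:ℝ) < x ^ γ := Real.rpow_pos_of_pos hx γ
  have hB : (0:ℝ) < (x + 1) ^ γ := Real.rpow_pos_of_pos hx1 γ
  have key : x ^ γ * (x + 1 + γ) ≤ (x + 1) ^ γ * (x + 1) := by
    have hb := one_add_mul_self_le_rpow_one_add (s := 1/x) (by have := one_div_nonneg.mpr hx.le; linarith) (p := γ + 1)
      (by linarith)
    have h1 : (1 : ℝ) + 1/x = (x + 1)/x := by field_simp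
    rw [h1, Real.div_rpow hx1.le hx.le] at hb
    have hxg : (0:ℝ) < x ^ (γ + 1) := Real.rpow_pos_of_pos hx _
    rw [le_div_iff₀ hxg] at hb
    have h2 : x ^ (γ + 1) = x ^ γ * x := by rw [Real.rpow_add hx, Real.rpow_one]
    have h3 : (x + 1) ^ (γ + 1) = (x + 1) ^ γ * (x + 1) := by
      rw [Real.rpow_add hx1, Real.rpow_one]
    rw [h2, h3] at hb
    have h4 : (1 + (γ + 1) * (1/x)) * (x ^ γ * x) = x ^ γ * (x + 1 + γ) + x^γ * 1/x * 0 := by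
      field_simp; ring
    nlinarith [hb, hA]
  rw [Real.rpow_neg hx.le, Real.rpow_neg hx1.le, Real.rpow_neg hx1.le,
    Real.rpow_add hx1, Real.rpow_one]
  have h3 : (x ^ γ)⁻¹ - ((x + 1) ^ γ)⁻¹ = ((x + 1) ^ γ - x ^ γ) / (x ^ γ * (x + 1) ^ γ) := by
    field_simp
  have h4 : γ * ((x + 1) ^ γ * (x + 1))⁻¹ = γ / ((x + 1) ^ γ * (x + 1)) := by ring
  rw [h3, h4, div_le_div_iff₀ (by positivity) (by positivity)]
  nlinarith [mul_le_mul_of_nonneg_left key hB.le, key, hA, hB]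

set_option maxHeartbeats 1600000 in
/-- tail estimate for the local maximal function of a matrix coefficient
with decay of order `(D+α)/2`:
`∫_{(G∖B_r)B_{r₀}} |M_Q V_g g|² dμ ≤ C₀² ‖g‖⁴ C'' r^{1−δ−α}` for all `r > r₀`. -/
theorem maximal_function_tail_estimate {G H : Type*} [Group G] [TopologicalSpace G]
    [IsTopologicalGroup G] [MeasurableSpace G] [BorelSpace G]
    [NormedAddCommGroup H] [InnerProductSpace ℂ H]
    (μ : Measure G) [μ.IsHaarMeasure] [μ.IsMulRightInvariant]
    (π : G → H →L[ℂ] H)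
    (hπnorm : ∀ (x : G) (f : H), ‖π x f‖ = ‖f‖)
    (d : G → G → ℝ)
    (hinv : ∀ x y z : G, d (z * x) (z * y) = d x y)
    (htri : ∀ x y z : G, d x z ≤ d x y + d y z)
    (hsymm : ∀ x y : G, d x y = d y x)
    (hnonneg : ∀ x y : G, 0 ≤ d x y)
    (D : ℝ) (hD : 0 < D)
    (δ : ℝ) (hδ : δ ∈ Set.Ioc (0 : ℝ) 1)
    (c : ℝ) (hc : 0 < c)
    (hAD : ∀ r : ℝ, 1 ≤ r → ∀ s : ℝ, 0 < s → s ≤ r →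
      μ ({x : G | d x 1 < r} \ {x : G | d x 1 < r - s})
        ≤ ENNReal.ofReal (c * (s / r) ^ δ) * μ {x : G | d x 1 < r})
    (c₂ : ℝ) (hc₂ : 0 < c₂)
    (hgrowth : ∀ t : ℝ, 1 ≤ t → μ {x : G | d x 1 < t} ≤ ENNReal.ofReal (c₂ * t ^ D))
    (r₀ : ℝ) (hr₀ : 1 < r₀) (hr₀nbhd : {x : G | d x 1 < r₀} ∈ nhds 1)
    (α : ℝ) (hα : 1 - δ < α)
    (C₀ : ℝ) (hC₀ : 0 < C₀)
    (g : H) (hg : g ≠ 0)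
    (hdecay : ∀ x : G,
      ‖(inner ℂ g (π x g) : ℂ)‖ / ‖g‖ ^ 2 ≤ C₀ * (1 + d x 1) ^ (-(D + α) / 2)) :
    ∃ C'' > 0, ∀ r : ℝ, r₀ < r →
      ∫⁻ x in {y : G | d y 1 < r}ᶜ * {y : G | d y 1 < r₀},
          ENNReal.ofReal
            ((⨆ z : {y : G // d y 1 < r₀}, ‖(inner ℂ g (π (x * (z : G)) g) : ℂ)‖) ^ 2) ∂μ
        ≤ ENNReal.ofReal (C₀ ^ 2 * ‖g‖ ^ 4 * C'' * r ^ (1 - δ - α)) := by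
  obtain ⟨hδ0, hδ1⟩ := hδ
  have hγ : 0 < δ + α - 1 := by linarith
  set γ : ℝ := δ + α - 1 with hγdef
  have hr₀0 : (0:ℝ) < r₀ := by linarith
  have hr₁0 : (0:ℝ) < r₀ - 1 := by linarith
  set M₁ : ℝ := max 1 ((3*r₀) ^ (D - δ)) with hM₁def
  have hM₁pos : (0:ℝ) < M₁ := lt_of_lt_of_le one_pos (le_max_left _ _)
  have hb2 : (0:ℝ) < 2*r₀+1 := by linarith
  have hb3 : (0:ℝ) < r₀/(r₀-1) := div_pos hr₀0 hr₁0
  have hP2 : (0:ℝ) < (2*r₀+1) ^ (γ+1) := Real.rpow_pos_of_pos hb2 _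
  have hP3 : (0:ℝ) < (r₀/(r₀-1)) ^ γ := Real.rpow_pos_of_pos hb3 _
  refine ⟨c * c₂ * M₁ * (2*r₀+1) ^ (γ+1) * (r₀/(r₀-1)) ^ γ / γ,
    div_pos (mul_pos (mul_pos (mul_pos (mul_pos hc hc₂) hM₁pos) hP2) hP3) hγ, ?_⟩
  intro r hr
  have hr1 : 1 < r := lt_trans hr₀ hr
  have hng : (0:ℝ) < ‖g‖ := norm_pos_iff.mpr hg
  have hg2 : (0:ℝ) < ‖g‖ ^ 2 := by positivity
  haveI : Nonempty {y : G // d y 1 < r₀} := ⟨⟨1, by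
    have h1 : (1:G) ∈ {x : G | d x 1 < r₀} := mem_of_mem_nhds hr₀nbhd
    exact h1⟩⟩
  set A : ℕ → Set G := fun m =>
    {x : G | d x 1 < r - r₀ + m + 1} \ {x : G | d x 1 < r - r₀ + m} with hAdef
  set F : G → ℝ≥0∞ := fun x => ENNReal.ofReal
      ((⨆ z : {y : G // d y 1 < r₀}, ‖(inner ℂ g (π (x * (z : G)) g) : ℂ)‖) ^ 2) with hFdef
  set K' : ℝ := C₀ ^ 2 * ‖g‖ ^ 4 * c * c₂ * M₁ * (2*r₀+1) ^ (γ+1) * (1/γ) with hK'def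
  have hK'0 : 0 ≤ K' := by
    have : (0:ℝ) ≤ 1/γ := by positivity
    positivity
  -- subset of union of annuli
  have hsub : ({y : G | d y 1 < r}ᶜ * {y : G | d y 1 < r₀}) ⊆ ⋃ m : ℕ, A m := by
    rintro x hx
    obtain ⟨a, ha, b, hb, rfl⟩ := hx
    have ha' : r ≤ d a 1 := not_lt.mp ha
    have hb' : d b 1 < r₀ := hb
    have h1 : d a (a*b) = d b 1 := by
      calc d a (a*b) = d (a*1) (a*b) := by rw [mul_one]
        _ = d 1 b := hinv 1 b a
        _ = d b 1 := hsymm 1 b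
    have hdab : r - r₀ ≤ d (a*b) 1 := by
      have h2 := htri a (a*b) 1
      rw [h1] at h2
      linarith
    have hw0 : 0 ≤ d (a*b) 1 - (r - r₀) := by linarith
    refine Set.mem_iUnion.mpr ⟨⌊d (a*b) 1 - (r - r₀)⌋₊, ?_, ?_⟩
    · have := Nat.lt_floor_add_one (d (a*b) 1 - (r - r₀))
      simp only [Set.mem_setOf_eq]
      linarith
    · have := Nat.floor_le hw0
      simp only [Set.mem_setOf_eq]
      push_neg
      linarith
  -- per-annulus bound
  have hAm : ∀ m : ℕ, ∫⁻ x in A m, F x ∂μ ≤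
      ENNReal.ofReal (K' * ((r + m - 1) ^ (-γ) - (r + m) ^ (-γ))) := by
    intro m
    have hm0 : (0:ℝ) ≤ (m:ℝ) := Nat.cast_nonneg m
    have ht1 : (1:ℝ) ≤ 1 + max 0 (r - 2*r₀ + m) := le_add_of_nonneg_right (le_max_left 0 _)
    have ht0 : (0:ℝ) < 1 + max 0 (r - 2*r₀ + m) := by linarith
    have hR1 : (1:ℝ) ≤ r - r₀ + m + 1 := by linarith
    have hR0 : (0:ℝ) < r - r₀ + m + 1 := by linarith
    have he0 : (0:ℝ) ≤ (1 + max 0 (r - 2*r₀ + m)) ^ (-(D+α)) := Real.rpow_nonneg ht0.le _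
    have he1 : (0:ℝ) ≤ (1 + max 0 (r - 2*r₀ + m)) ^ (D-δ) := Real.rpow_nonneg ht0.le _
    -- pointwise bound
    have hpt : ∀ x ∈ A m, F x ≤
        ENNReal.ofReal (C₀^2 * ‖g‖^4 * (1 + max 0 (r - 2*r₀ + m)) ^ (-(D+α))) := by
      intro x hx
      have hxd : r - r₀ + m ≤ d x 1 := not_lt.mp hx.2
      have hsup : (⨆ z : {y : G // d y 1 < r₀}, ‖(inner ℂ g (π (x * (z : G)) g) : ℂ)‖) ≤
          C₀ * ‖g‖^2 * (1 + max 0 (r - 2*r₀ + m)) ^ (-(D+α)/2) := by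
        apply ciSup_le
        intro z
        have h1 := hdecay (x * (z : G))
        rw [div_le_iff₀ hg2] at h1
        have hdz : d x (x * (z:G)) = d (z:G) 1 := by
          calc d x (x * (z:G)) = d (x*1) (x * (z:G)) := by rw [mul_one]
            _ = d 1 (z:G) := hinv 1 (z:G) x
            _ = d (z:G) 1 := hsymm 1 (z:G)
        have hlow : (1 + max 0 (r - 2*r₀ + m)) ≤ 1 + d (x * (z:G)) 1 := by
          have h2 := htri x (x * (z:G)) 1
          rw [hdz] at h2
          have hz := z.2
          have : max 0 (r - 2*r₀ + m) ≤ d (x * (z:G)) 1 :=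
            max_le (hnonneg _ _) (by linarith)
          linarith
        have h3 : (1 + d (x * (z:G)) 1) ^ (-(D+α)/2) ≤
            (1 + max 0 (r - 2*r₀ + m)) ^ (-(D+α)/2) :=
          Real.rpow_le_rpow_of_nonpos ht0 hlow (by apply div_nonpos_of_nonpos_of_nonneg <;> linarith)
        calc ‖(inner ℂ g (π (x * (z:G)) g) : ℂ)‖
            ≤ C₀ * (1 + d (x * (z:G)) 1) ^ (-(D+α)/2) * ‖g‖^2 := h1
          _ = C₀ * ‖g‖^2 * (1 + d (x * (z:G)) 1) ^ (-(D+α)/2) := by ring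
          _ ≤ C₀ * ‖g‖^2 * (1 + max 0 (r - 2*r₀ + m)) ^ (-(D+α)/2) :=
            mul_le_mul_of_nonneg_left h3 (by positivity)
      have hsup0 : 0 ≤ ⨆ z : {y : G // d y 1 < r₀}, ‖(inner ℂ g (π (x * (z : G)) g) : ℂ)‖ :=
        Real.iSup_nonneg fun z => norm_nonneg _
      apply ENNReal.ofReal_le_ofReal
      calc (⨆ z : {y : G // d y 1 < r₀}, ‖(inner ℂ g (π (x * (z : G)) g) : ℂ)‖) ^ 2
          ≤ (C₀ * ‖g‖^2 * (1 + max 0 (r - 2*r₀ + m)) ^ (-(D+α)/2)) ^ 2 :=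
            pow_le_pow_left₀ hsup0 hsup 2
        _ = C₀^2 * ‖g‖^4 * ((1 + max 0 (r - 2*r₀ + m)) ^ (-(D+α)/2) *
              (1 + max 0 (r - 2*r₀ + m)) ^ (-(D+α)/2)) := by ring
        _ = C₀^2 * ‖g‖^4 * (1 + max 0 (r - 2*r₀ + m)) ^ (-(D+α)) := by
            rw [← Real.rpow_add ht0]
            congr 1
            ring
    -- measure bound
    have hmeas : μ (A m) ≤ ENNReal.ofReal (c * c₂ * (r - r₀ + m + 1) ^ (D-δ)) := by
      have h5 := hAD (r - r₀ + m + 1) hR1 1 one_pos (by linarith)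
      rw [show r - r₀ + (m:ℝ) + 1 - 1 = r - r₀ + m by ring] at h5
      have h6 : μ (A m) ≤ ENNReal.ofReal (c * (1/(r - r₀ + m + 1)) ^ δ) *
          ENNReal.ofReal (c₂ * (r - r₀ + m + 1) ^ D) :=
        h5.trans (mul_le_mul_right (hgrowth _ hR1) _)
      have h7 : (0:ℝ) ≤ c * (1/(r - r₀ + m + 1)) ^ δ :=
        mul_nonneg hc.le (Real.rpow_nonneg (by positivity) _)
      rw [← ENNReal.ofReal_mul h7] at h6
      refine h6.trans_eq (congrArg _ ?_)
      rw [one_div, Real.inv_rpow hR0.le, ← Real.rpow_neg hR0.le]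
      calc c * (r - r₀ + m + 1) ^ (-δ) * (c₂ * (r - r₀ + m + 1) ^ D)
          = c * c₂ * ((r - r₀ + m + 1) ^ (-δ) * (r - r₀ + m + 1) ^ D) := by ring
        _ = c * c₂ * (r - r₀ + m + 1) ^ (D - δ) := by
            rw [← Real.rpow_add hR0]; congr 2; ring
    -- key comparison facts
    have htR : (1 + max 0 (r - 2*r₀ + m)) ≤ r - r₀ + m + 1 := by
      rcases le_or_gt (r - 2*r₀ + m) 0 with h | h
      · rw [max_eq_left h]; linarith
      · rw [max_eq_right h.le]; linarith
    have hR3 : r - r₀ + m + 1 ≤ 3*r₀ * (1 + max 0 (r - 2*r₀ + m)) := by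
      rcases le_or_gt (r - 2*r₀ + m) 0 with h | h
      · rw [max_eq_left h]; linarith
      · rw [max_eq_right h.le]
        nlinarith [mul_nonneg (by linarith : (0:ℝ) ≤ 3*r₀ - 1) h.le]
    have l1 : (r - r₀ + m + 1) ^ (D-δ) ≤ M₁ * (1 + max 0 (r - 2*r₀ + m)) ^ (D-δ) := by
      rcases le_or_gt 0 (D - δ) with hq | hq
      · calc (r - r₀ + m + 1) ^ (D-δ) ≤ (3*r₀ * (1 + max 0 (r - 2*r₀ + m))) ^ (D-δ) :=
            Real.rpow_le_rpow hR0.le hR3 hq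
          _ = (3*r₀) ^ (D-δ) * (1 + max 0 (r - 2*r₀ + m)) ^ (D-δ) :=
            Real.mul_rpow (by positivity) ht0.le
          _ ≤ M₁ * (1 + max 0 (r - 2*r₀ + m)) ^ (D-δ) :=
            mul_le_mul_of_nonneg_right (le_max_right 1 _) he1
      · calc (r - r₀ + m + 1) ^ (D-δ) ≤ (1 + max 0 (r - 2*r₀ + m)) ^ (D-δ) :=
            Real.rpow_le_rpow_of_nonpos ht0 htR hq.le
          _ ≤ M₁ * (1 + max 0 (r - 2*r₀ + m)) ^ (D-δ) :=
            le_mul_of_one_le_left he1 (le_max_left 1 _)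
    have hrm : (0:ℝ) < r + m := by linarith
    have l3 : (1 + max 0 (r - 2*r₀ + m)) ^ (-(γ+1)) ≤ (2*r₀+1) ^ (γ+1) * (r + m) ^ (-(γ+1)) := by
      have hle : r + m ≤ (2*r₀+1) * (1 + max 0 (r - 2*r₀ + m)) := by
        rcases le_or_gt (r - 2*r₀ + m) 0 with h | h
        · rw [max_eq_left h]; linarith
        · rw [max_eq_right h.le]
          nlinarith [mul_nonneg (by linarith : (0:ℝ) ≤ 2*r₀) h.le]
      have h8 : (r + m)/(2*r₀+1) ≤ 1 + max 0 (r - 2*r₀ + m) := by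
        rw [div_le_iff₀ hb2]; linarith
      have h9 : (1 + max 0 (r - 2*r₀ + m)) ^ (-(γ+1)) ≤ ((r + m)/(2*r₀+1)) ^ (-(γ+1)) :=
        Real.rpow_le_rpow_of_nonpos (div_pos hrm hb2) h8 (by linarith)
      refine h9.trans_eq ?_
      rw [Real.div_rpow hrm.le hb2.le, Real.rpow_neg hb2.le, div_inv_eq_mul]
      ring
    have l4 : (r + m) ^ (-(γ+1)) ≤ (1/γ) * ((r + m - 1) ^ (-γ) - (r + m) ^ (-γ)) := by
      have hx' : (0:ℝ) < r + m - 1 := by linarith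
      have h := aux_bern hγ hx'
      rw [show r + (m:ℝ) - 1 + 1 = r + m by ring] at h
      calc (r + m) ^ (-(γ+1)) = (γ * (r + m) ^ (-(γ+1)))/γ := by field_simp
        _ ≤ ((r + m - 1) ^ (-γ) - (r + m) ^ (-γ))/γ := by
            gcongr
        _ = (1/γ) * ((r + m - 1) ^ (-γ) - (r + m) ^ (-γ)) := by ring
    -- combine
    calc ∫⁻ x in A m, F x ∂μ
        ≤ ENNReal.ofReal (C₀^2 * ‖g‖^4 * (1 + max 0 (r - 2*r₀ + m)) ^ (-(D+α))) * μ (A m) :=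
          aux_setLIntegral_le μ (A m) F _ hpt
      _ ≤ ENNReal.ofReal (C₀^2 * ‖g‖^4 * (1 + max 0 (r - 2*r₀ + m)) ^ (-(D+α))) *
            ENNReal.ofReal (c * c₂ * (r - r₀ + m + 1) ^ (D-δ)) := mul_le_mul_right hmeas _
      _ = ENNReal.ofReal (C₀^2 * ‖g‖^4 * (1 + max 0 (r - 2*r₀ + m)) ^ (-(D+α)) *
            (c * c₂ * (r - r₀ + m + 1) ^ (D-δ))) :=
          (ENNReal.ofReal_mul (by positivity)).symm
      _ ≤ ENNReal.ofReal (K' * ((r + m - 1) ^ (-γ) - (r + m) ^ (-γ))) := by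
          apply ENNReal.ofReal_le_ofReal
          calc C₀^2 * ‖g‖^4 * (1 + max 0 (r - 2*r₀ + m)) ^ (-(D+α)) *
                (c * c₂ * (r - r₀ + m + 1) ^ (D-δ))
              = (C₀^2 * ‖g‖^4 * c * c₂ * (1 + max 0 (r - 2*r₀ + m)) ^ (-(D+α))) *
                  (r - r₀ + m + 1) ^ (D-δ) := by ring
            _ ≤ (C₀^2 * ‖g‖^4 * c * c₂ * (1 + max 0 (r - 2*r₀ + m)) ^ (-(D+α))) *
                  (M₁ * (1 + max 0 (r - 2*r₀ + m)) ^ (D-δ)) := by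
                apply mul_le_mul_of_nonneg_left l1
                have h10 : (0:ℝ) ≤ C₀^2 * ‖g‖^4 := by positivity
                exact mul_nonneg (mul_nonneg (mul_nonneg h10 hc.le) hc₂.le) he0
            _ = (C₀^2 * ‖g‖^4 * c * c₂ * M₁) * ((1 + max 0 (r - 2*r₀ + m)) ^ (-(D+α)) *
                  (1 + max 0 (r - 2*r₀ + m)) ^ (D-δ)) := by ring
            _ = (C₀^2 * ‖g‖^4 * c * c₂ * M₁) * (1 + max 0 (r - 2*r₀ + m)) ^ (-(γ+1)) := by
                rw [← Real.rpow_add ht0]; congr 2; rw [hγdef]; ring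
            _ ≤ (C₀^2 * ‖g‖^4 * c * c₂ * M₁) * ((2*r₀+1) ^ (γ+1) * (r + m) ^ (-(γ+1))) := by
                apply mul_le_mul_of_nonneg_left l3
                positivity
            _ = (C₀^2 * ‖g‖^4 * c * c₂ * M₁ * (2*r₀+1) ^ (γ+1)) * (r + m) ^ (-(γ+1)) := by ring
            _ ≤ (C₀^2 * ‖g‖^4 * c * c₂ * M₁ * (2*r₀+1) ^ (γ+1)) *
                  ((1/γ) * ((r + m - 1) ^ (-γ) - (r + m) ^ (-γ))) := by
                apply mul_le_mul_of_nonneg_left l4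
                positivity
            _ = K' * ((r + m - 1) ^ (-γ) - (r + m) ^ (-γ)) := by rw [hK'def]; ring
  -- sum the series
  have hwnn : ∀ i : ℕ, 0 ≤ (r + i - 1) ^ (-γ) - (r + i) ^ (-γ) := by
    intro i
    have hi : (0:ℝ) ≤ (i:ℝ) := Nat.cast_nonneg i
    have h1 : (0:ℝ) < r + i - 1 := by linarith
    have := Real.rpow_le_rpow_of_nonpos h1 (by linarith : r + (i:ℝ) - 1 ≤ r + i)
      (by linarith : -γ ≤ 0)
    linarith
  have htsum : (∑' m : ℕ, ENNReal.ofReal (K' * ((r + m - 1) ^ (-γ) - (r + m) ^ (-γ))))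
      ≤ ENNReal.ofReal (K' * (r - 1) ^ (-γ)) := by
    apply Summable.tsum_le_of_sum_le ENNReal.summable
    intro s
    obtain ⟨N, hN⟩ := s.exists_nat_subset_range
    calc ∑ i ∈ s, ENNReal.ofReal (K' * ((r + i - 1) ^ (-γ) - (r + i) ^ (-γ)))
        ≤ ∑ i ∈ Finset.range N, ENNReal.ofReal (K' * ((r + i - 1) ^ (-γ) - (r + i) ^ (-γ))) :=
          Finset.sum_le_sum_of_subset hN
      _ = ENNReal.ofReal (∑ i ∈ Finset.range N, K' * ((r + i - 1) ^ (-γ) - (r + i) ^ (-γ))) :=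
          (ENNReal.ofReal_sum_of_nonneg fun i _ => mul_nonneg hK'0 (hwnn i)).symm
      _ ≤ ENNReal.ofReal (K' * (r - 1) ^ (-γ)) := by
          apply ENNReal.ofReal_le_ofReal
          rw [← Finset.mul_sum]
          apply mul_le_mul_of_nonneg_left _ hK'0
          have hts : ∑ i ∈ Finset.range N, ((r + i - 1) ^ (-γ) - (r + i) ^ (-γ))
              = (r + (0:ℕ) - 1) ^ (-γ) - (r + (N:ℕ) - 1) ^ (-γ) := by
            have := Finset.sum_range_sub' (fun i : ℕ => (r + i - 1) ^ (-γ)) N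
            rw [← this]
            apply Finset.sum_congr rfl
            intro i _
            congr 2
            push_cast
            ring
          rw [hts]
          have hN0 : (0:ℝ) ≤ (r + (N:ℕ) - 1) ^ (-γ) :=
            Real.rpow_nonneg (by have : (0:ℝ) ≤ (N:ℝ) := Nat.cast_nonneg N; linarith) _
          simp only [Nat.cast_zero, add_zero]
          linarith
  -- final bound
  have hfin : K' * (r - 1) ^ (-γ) ≤
      C₀ ^ 2 * ‖g‖ ^ 4 * (c * c₂ * M₁ * (2*r₀+1) ^ (γ+1) * (r₀/(r₀-1)) ^ γ / γ) *
        r ^ (1 - δ - α) := by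
    have hrpos : (0:ℝ) < r := by linarith
    have hfrac : (0:ℝ) < (r₀-1)/r₀ := div_pos hr₁0 hr₀0
    have hkey : r * ((r₀-1)/r₀) ≤ r - 1 := by
      rw [← mul_div_assoc, div_le_iff₀ hr₀0]
      nlinarith
    have h1 : (r - 1) ^ (-γ) ≤ (r * ((r₀-1)/r₀)) ^ (-γ) :=
      Real.rpow_le_rpow_of_nonpos (by positivity) hkey (by linarith)
    have h2 : (r * ((r₀-1)/r₀)) ^ (-γ) = ((r₀-1)/r₀) ^ (-γ) * r ^ (-γ) := by
      rw [Real.mul_rpow hrpos.le hfrac.le]; ring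
    have h3 : ((r₀-1)/r₀) ^ (-γ) = (r₀/(r₀-1)) ^ γ := by
      rw [Real.rpow_neg hfrac.le, ← Real.inv_rpow hfrac.le, inv_div]
    have h4 : (1:ℝ) - δ - α = -γ := by rw [hγdef]; ring
    rw [h4]
    calc K' * (r - 1) ^ (-γ) ≤ K' * ((r₀/(r₀-1)) ^ γ * r ^ (-γ)) := by
          apply mul_le_mul_of_nonneg_left _ hK'0
          rw [← h3, ← h2]; exact h1
      _ = C₀ ^ 2 * ‖g‖ ^ 4 * (c * c₂ * M₁ * (2*r₀+1) ^ (γ+1) * (r₀/(r₀-1)) ^ γ / γ) *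
            r ^ (-γ) := by rw [hK'def]; ring
  calc ∫⁻ x in {y : G | d y 1 < r}ᶜ * {y : G | d y 1 < r₀}, F x ∂μ
      ≤ ∫⁻ x in ⋃ m : ℕ, A m, F x ∂μ := lintegral_mono_set hsub
    _ ≤ ∑' m : ℕ, ∫⁻ x in A m, F x ∂μ := lintegral_iUnion_le _ _
    _ ≤ ∑' m : ℕ, ENNReal.ofReal (K' * ((r + m - 1) ^ (-γ) - (r + m) ^ (-γ))) :=
        ENNReal.tsum_le_tsum hAm
    _ ≤ ENNReal.ofReal (K' * (r - 1) ^ (-γ)) := htsum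
    _ ≤ ENNReal.ofReal (C₀ ^ 2 * ‖g‖ ^ 4 *
          (c * c₂ * M₁ * (2*r₀+1) ^ (γ+1) * (r₀/(r₀-1)) ^ γ / γ) * r ^ (1 - δ - α)) :=
        ENNReal.ofReal_le_ofReal hfin
end
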